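/- arXiv:1408.1904 — 13 statements merged into one kernel-verified Lean document; each statement's English description precedes it below -/
import Mathlib

section
/- For all natural numbers n, m, t and all real numbers x, y, the t-fold application of the operator D_∂ satisfies: e^{(x+y)/2} · (D_∂^t (f))(x,y) = Σ_{i=0}^{min(t,m)} C(t,i) · (m!/(m−i)!) · ( e^x · (d^{t−i}/du^{t−i})(e^{−u} u^n)|_{u=x} ) · y^{m−i}, where f(x,y) = e^{−(x+y)/2} x^n y^m. -/
/-- The operator `D_∂` sending a function `f : ℝ → ℝ → ℝ` (a curried function of
two real variables) to `(x, y) ↦ (∂f/∂x)(x,y) + (∂f/∂y)(x,y)`. -/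
noncomputable def Dpartial (f : ℝ → ℝ → ℝ) : ℝ → ℝ → ℝ :=
  fun x y => deriv (fun u => f u y) x + deriv (fun v => f x v) y

namespace StmtAux

noncomputable def g (n : ℕ) : ℝ → ℝ := fun u => Real.exp (-u) * u ^ n

noncomputable def G (n k : ℕ) : ℝ → ℝ := iteratedDeriv k (g n)

lemma contDiff_g (n : ℕ) : ContDiff ℝ (⊤ : ℕ∞) (g n) := by
  unfold g; fun_prop

lemma G_hasDerivAt (n k : ℕ) (x : ℝ) : HasDerivAt (G n k) (G n (k + 1) x) x := by
  have h : Differentiable ℝ (G n k) := by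
    rw [G, iteratedDeriv_eq_iterate]
    exact ((contDiff_g n).iterate_deriv k).differentiable (by simp)
  have h2 := (h x).hasDerivAt
  have h3 : deriv (G n k) x = G n (k + 1) x := by
    rw [G, G, iteratedDeriv_succ]
  rwa [h3] at h2

lemma hDx (n m t : ℕ) (c : ℕ → ℝ) (x y : ℝ) :
    HasDerivAt (fun u => Real.exp (-(u + y) / 2) *
        ∑ i ∈ Finset.range (t + 1), c i * (Real.exp u * G n (t - i) u) * y ^ (m - i))
      (Real.exp (-(x + y) / 2) * (-1 / 2) *
          (∑ i ∈ Finset.range (t + 1), c i * (Real.exp x * G n (t - i) x) * y ^ (m - i)) +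
        Real.exp (-(x + y) / 2) *
          (∑ i ∈ Finset.range (t + 1),
            c i * (Real.exp x * G n (t - i) x + Real.exp x * G n (t - i + 1) x) * y ^ (m - i))) x := by
  refine (HasDerivAt.exp ((((hasDerivAt_id x).add_const y).neg).div_const 2)).mul
    (HasDerivAt.fun_sum fun i _ => ?_)
  exact (((Real.hasDerivAt_exp x).mul (G_hasDerivAt n (t - i) x)).const_mul (c i)).mul_const _

lemma hDy (n m t : ℕ) (c : ℕ → ℝ) (x y : ℝ) :
    HasDerivAt (fun v => Real.exp (-(x + v) / 2) *
        ∑ i ∈ Finset.range (t + 1), c i * (Real.exp x * G n (t - i) x) * v ^ (m - i))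
      (Real.exp (-(x + y) / 2) * (-1 / 2) *
          (∑ i ∈ Finset.range (t + 1), c i * (Real.exp x * G n (t - i) x) * y ^ (m - i)) +
        Real.exp (-(x + y) / 2) *
          (∑ i ∈ Finset.range (t + 1),
            c i * (Real.exp x * G n (t - i) x) * (((m - i : ℕ) : ℝ) * y ^ (m - i - 1)))) y := by
  refine (HasDerivAt.exp ((((hasDerivAt_id y).const_add x).neg).div_const 2)).mul
    (HasDerivAt.fun_sum fun i _ => ?_)
  exact (hasDerivAt_pow (m - i) y).const_mul _

lemma comb (B : ℕ → ℕ → ℝ) (t m : ℕ) :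
    (∑ i ∈ Finset.range (t + 1),
      (t.choose i : ℝ) * (m.descFactorial i : ℝ) * B (t + 1 - i) (m - i)) +
    (∑ i ∈ Finset.range (t + 1),
      (t.choose i : ℝ) * (m.descFactorial (i + 1) : ℝ) * B (t - i) (m - i - 1)) =
    ∑ i ∈ Finset.range (t + 2),
      ((t + 1).choose i : ℝ) * (m.descFactorial i : ℝ) * B (t + 1 - i) (m - i) := by
  rw [Finset.sum_range_succ' _ (t + 1), Finset.sum_range_succ' _ t]
  simp only [Nat.choose_succ_succ, Nat.succ_sub_succ, Nat.sub_sub, Nat.choose_zero_right,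
    Nat.descFactorial_zero, Nat.cast_add, Nat.cast_one, Nat.cast_mul, add_mul, Nat.sub_zero,
    Finset.sum_add_distrib]
  rw [show (∑ i ∈ Finset.range (t + 1), (t.choose (i + 1) : ℝ) * (m.descFactorial (i + 1) : ℝ) *
      B (t - i) (m - (i + 1))) = ∑ i ∈ Finset.range t, (t.choose (i + 1) : ℝ) *
      (m.descFactorial (i + 1) : ℝ) * B (t - i) (m - (i + 1)) from by
    rw [Finset.sum_range_succ, Nat.choose_succ_self]; simp]
  ring

lemma key (n m t : ℕ) : ∀ x y : ℝ,
    Dpartial^[t] (fun a b => Real.exp (-(a + b) / 2) * a ^ n * b ^ m) x y =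
      Real.exp (-(x + y) / 2) *
        ∑ i ∈ Finset.range (t + 1),
          (t.choose i : ℝ) * (m.descFactorial i : ℝ) * (Real.exp x * G n (t - i) x) *
            y ^ (m - i) := by
  induction t with
  | zero =>
    intro x y
    have h0 : Real.exp x * (Real.exp (-x) * x ^ n) = x ^ n := by
      rw [← mul_assoc, ← Real.exp_add, add_neg_cancel, Real.exp_zero, one_mul]
    simp only [Function.iterate_zero, id_eq, zero_add, Finset.range_one,
      Finset.sum_singleton, Nat.choose_self, Nat.descFactorial_zero, Nat.cast_one,
      Nat.zero_sub, Nat.sub_zero, one_mul, G, g, iteratedDeriv_zero, h0]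
    ring
  | succ t ih =>
    intro x y
    rw [Function.iterate_succ_apply']
    simp only [Dpartial]
    have hx : (fun u => Dpartial^[t]
        (fun a b => Real.exp (-(a + b) / 2) * a ^ n * b ^ m) u y) =
        fun u => Real.exp (-(u + y) / 2) *
          ∑ i ∈ Finset.range (t + 1),
            (t.choose i : ℝ) * (m.descFactorial i : ℝ) * (Real.exp u * G n (t - i) u) *
              y ^ (m - i) := funext fun u => ih u y
    have hy : (fun v => Dpartial^[t]
        (fun a b => Real.exp (-(a + b) / 2) * a ^ n * b ^ m) x v) =
        fun v => Real.exp (-(x + v) / 2) *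
          ∑ i ∈ Finset.range (t + 1),
            (t.choose i : ℝ) * (m.descFactorial i : ℝ) * (Real.exp x * G n (t - i) x) *
              v ^ (m - i) := funext fun v => ih x v
    rw [hx, hy]
    have hdx := (hDx n m t (fun i => (t.choose i : ℝ) * (m.descFactorial i : ℝ)) x y).deriv
    have hdy := (hDy n m t (fun i => (t.choose i : ℝ) * (m.descFactorial i : ℝ)) x y).deriv
    rw [hdx, hdy]
    have e1 : (∑ i ∈ Finset.range (t + 1),
        (t.choose i : ℝ) * (m.descFactorial i : ℝ) *
          (Real.exp x * G n (t - i) x + Real.exp x * G n (t - i + 1) x) * y ^ (m - i)) =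
        (∑ i ∈ Finset.range (t + 1),
          (t.choose i : ℝ) * (m.descFactorial i : ℝ) * (Real.exp x * G n (t - i) x) *
            y ^ (m - i)) +
        ∑ i ∈ Finset.range (t + 1),
          (t.choose i : ℝ) * (m.descFactorial i : ℝ) *
            (Real.exp x * G n (t + 1 - i) x * y ^ (m - i)) := by
      rw [← Finset.sum_add_distrib]
      refine Finset.sum_congr rfl fun i hi => ?_
      have h1 : t + 1 - i = t - i + 1 := by
        have := Finset.mem_range.mp hi; omega
      rw [h1]; ring
    have e2 : (∑ i ∈ Finset.range (t + 1),
        (t.choose i : ℝ) * (m.descFactorial i : ℝ) * (Real.exp x * G n (t - i) x) *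
          (((m - i : ℕ) : ℝ) * y ^ (m - i - 1))) =
        ∑ i ∈ Finset.range (t + 1),
          (t.choose i : ℝ) * (m.descFactorial (i + 1) : ℝ) *
            (Real.exp x * G n (t - i) x * y ^ (m - i - 1)) := by
      refine Finset.sum_congr rfl fun i _ => ?_
      rw [Nat.descFactorial_succ]
      push_cast
      ring
    have e3 : (∑ i ∈ Finset.range (t + 1 + 1),
        ((t + 1).choose i : ℝ) * (m.descFactorial i : ℝ) *
          (Real.exp x * G n (t + 1 - i) x) * y ^ (m - i)) =
        ∑ i ∈ Finset.range (t + 2),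
          ((t + 1).choose i : ℝ) * (m.descFactorial i : ℝ) *
            (Real.exp x * G n (t + 1 - i) x * y ^ (m - i)) :=
      Finset.sum_congr rfl fun i _ => by ring
    have hc := comb (fun k p => Real.exp x * G n k x * y ^ p) t m
    rw [e1, e2, e3, ← hc]
    ring

end StmtAux

theorem stmt_0 (n m t : ℕ) (x y : ℝ) :
    Real.exp ((x + y) / 2) *
      (Dpartial^[t] (fun a b => Real.exp (-(a + b) / 2) * a ^ n * b ^ m)) x y =
    ∑ i ∈ Finset.range (min t m + 1),
      (t.choose i : ℝ) * ((m.factorial / (m - i).factorial : ℕ) : ℝ) *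
        (Real.exp x * iteratedDeriv (t - i) (fun u => Real.exp (-u) * u ^ n) x) *
        y ^ (m - i) := by
  rw [StmtAux.key n m t x y, ← mul_assoc, ← Real.exp_add,
    show (x + y) / 2 + -(x + y) / 2 = 0 by ring, Real.exp_zero, one_mul]
  rw [show (∑ i ∈ Finset.range (t + 1),
      (t.choose i : ℝ) * (m.descFactorial i : ℝ) * (Real.exp x * StmtAux.G n (t - i) x) *
        y ^ (m - i)) = ∑ i ∈ Finset.range (min t m + 1),
      (t.choose i : ℝ) * (m.descFactorial i : ℝ) * (Real.exp x * StmtAux.G n (t - i) x) *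
        y ^ (m - i) from by
    refine (Finset.sum_subset ?_ ?_).symm
    · intro i hi
      simp only [Finset.mem_range] at hi ⊢
      omega
    · intro i hi hni
      simp only [Finset.mem_range] at hi hni
      have hm : m < i := by omega
      rw [Nat.descFactorial_eq_zero_iff_lt.mpr hm]
      simp]
  refine Finset.sum_congr rfl fun i hi => ?_
  have him : i ≤ m := by
    simp only [Finset.mem_range] at hi; omega
  rw [Nat.descFactorial_eq_div him]
  rfl
end

section
/- For all natural numbers n, m and all real numbers x, y: (1/(n!·m!)) · e^{(x+y)/2} · (D_∂^{n+m}(f))(x,y) = Σ_{i=0}^{m} Σ_{s=0}^{n} ((−1)^{i+s}/(i!·s!)) · C(m+n, m−i) · C(n+i, n−s) · x^s · y^i, where f(x,y) = e^{−(x+y)/2} x^n y^m. -/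
open Finset

noncomputable def c (n m : ℕ) : ℕ → ℕ → ℕ → ℝ
  | 0, s, i => if s = n ∧ i = m then 1 else 0
  | (k+1), s, i => -(c n m k s i) + (s+1) * c n m k (s+1) i + (i+1) * c n m k s (i+1)

lemma c_zero (n m k : ℕ) : ∀ s i, n < s ∨ m < i → c n m k s i = 0 := by
  induction k with
  | zero =>
    intro s i h
    simp only [c]
    rw [if_neg (by omega)]
  | succ k ih =>
    intro s i h
    simp only [c]
    rw [ih s i h, ih (s+1) i (by omega), ih s (i+1) (by omega)]
    ring

lemma c_closed (n m k : ℕ) : ∀ s i, s ≤ n → i ≤ m →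
    c n m k s i = (-1:ℝ)^(k + (n-s) + (m-i)) *
      ((k.choose ((n-s)+(m-i)) * ((n-s)+(m-i)).factorial * n.choose s * m.choose i : ℕ) : ℝ) := by
  induction k with
  | zero =>
    intro s i hs hi
    obtain ⟨a, rfl⟩ : ∃ a, n = s + a := ⟨n - s, by omega⟩
    obtain ⟨b, rfl⟩ : ∃ b, m = i + b := ⟨m - i, by omega⟩
    simp only [c, Nat.add_sub_cancel_left]
    rcases Nat.eq_zero_or_pos (a + b) with h | h
    · obtain ⟨rfl, rfl⟩ : a = 0 ∧ b = 0 := by omega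
      simp
    · rw [if_neg (by omega), Nat.choose_eq_zero_of_lt (by omega)]
      simp
  | succ k ih =>
    intro s i hs hi
    obtain ⟨a, rfl⟩ : ∃ a, n = s + a := ⟨n - s, by omega⟩
    obtain ⟨b, rfl⟩ : ∃ b, m = i + b := ⟨m - i, by omega⟩
    simp only [c, Nat.add_sub_cancel_left]
    rw [ih s i (by omega) (by omega)]
    simp only [Nat.add_sub_cancel_left]
    match a, b with
    | 0, 0 =>
      rw [c_zero _ _ _ (s+1) i (by omega), c_zero _ _ _ s (i+1) (by omega)]
      simp [pow_succ]
    | 0, b+1 =>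
      rw [c_zero _ _ _ (s+1) i (by omega), ih s (i+1) (by omega) (by omega)]
      have h2 : (i+(b+1)) - (i+1) = b := by omega
      have h2' : (s+0) - s = 0 := by omega
      rw [h2, h2']
      simp only [Nat.zero_add, Nat.add_zero]
      have e1 : ((k+1).choose (b+1) : ℝ) = k.choose b + k.choose (b+1) := by
        exact_mod_cast Nat.choose_succ_succ' k b
      have h3 := Nat.choose_succ_right_eq (i+(b+1)) i
      have h4 : (i+(b+1)) - i = b+1 := by omega
      rw [h4] at h3
      have e2 : ((i+(b+1)).choose (i+1) : ℝ) * (i+1) = (i+(b+1)).choose i * (b+1) := by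
        exact_mod_cast h3
      have e3 : (((b+1)).factorial : ℝ) = (b+1) * b.factorial := by
        exact_mod_cast Nat.factorial_succ b
      push_cast
      push_cast at e1 e2 e3
      rw [e1, e3]
      linear_combination ((-1:ℝ)^(k+b) * (k.choose b) * (b.factorial) * ((s).choose s)) * e2
    | a+1, 0 =>
      rw [c_zero _ _ _ s (i+1) (by omega), ih (s+1) i (by omega) (by omega)]
      have h2 : (s+(a+1)) - (s+1) = a := by omega
      have h2' : (i+0) - i = 0 := by omega
      rw [h2, h2']
      simp only [Nat.zero_add, Nat.add_zero]
      have e1 : ((k+1).choose (a+1) : ℝ) = k.choose a + k.choose (a+1) := by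
        exact_mod_cast Nat.choose_succ_succ' k a
      have h3 := Nat.choose_succ_right_eq (s+(a+1)) s
      have h4 : (s+(a+1)) - s = a+1 := by omega
      rw [h4] at h3
      have e2 : ((s+(a+1)).choose (s+1) : ℝ) * (s+1) = (s+(a+1)).choose s * (a+1) := by
        exact_mod_cast h3
      have e3 : (((a+1)).factorial : ℝ) = (a+1) * a.factorial := by
        exact_mod_cast Nat.factorial_succ a
      push_cast
      push_cast at e1 e2 e3
      rw [e1, e3]
      linear_combination ((-1:ℝ)^(k+a) * (k.choose a) * (a.factorial) * ((i).choose i)) * e2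
    | a+1, b+1 =>
      rw [ih (s+1) i (by omega) (by omega), ih s (i+1) (by omega) (by omega)]
      have hA : (s+(a+1)) - (s+1) = a := by omega
      have hB : (i+(b+1)) - (i+1) = b := by omega
      rw [hA, hB]
      simp only [Nat.add_sub_cancel_left]
      have hd1 : (a+1)+(b+1) = (a+b+1)+1 := by omega
      have hd2 : a + (b+1) = a+b+1 := by omega
      have hd3 : (a+1) + b = a+b+1 := by omega
      rw [hd1, hd2, hd3]
      have e1 : ((k+1).choose ((a+b+1)+1) : ℝ) = k.choose (a+b+1) + k.choose ((a+b+1)+1) := by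
        exact_mod_cast Nat.choose_succ_succ' k (a+b+1)
      have h3 := Nat.choose_succ_right_eq (s+(a+1)) s
      have h4 : (s+(a+1)) - s = a+1 := by omega
      rw [h4] at h3
      have e2 : ((s+(a+1)).choose (s+1) : ℝ) * (s+1) = (s+(a+1)).choose s * (a+1) := by
        exact_mod_cast h3
      have h5 := Nat.choose_succ_right_eq (i+(b+1)) i
      have h6 : (i+(b+1)) - i = b+1 := by omega
      rw [h6] at h5
      have e5 : ((i+(b+1)).choose (i+1) : ℝ) * (i+1) = (i+(b+1)).choose i * (b+1) := by
        exact_mod_cast h5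
      have e3 : (((a+b+1)+1).factorial : ℝ) = (a+b+2) * (a+b+1).factorial := by
        rw [Nat.factorial_succ]
        push_cast
        ring
      push_cast
      push_cast at e1 e2 e3 e5
      rw [e1, e3]
      linear_combination ((-1:ℝ)^(k+(a+1)+b) * (k.choose (a+b+1)) * ((a+b+1).factorial) * ((i+(b+1)).choose i)) * e2
        + ((-1:ℝ)^(k+a+(b+1)) * (k.choose (a+b+1)) * ((a+b+1).factorial) * ((s+(a+1)).choose s)) * e5
noncomputable def P (n m k : ℕ) (x y : ℝ) : ℝ :=
  ∑ s ∈ range (n+1), ∑ i ∈ range (m+1), c n m k s i * x^s * y^i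

lemma hasDerivAt_x (n m k : ℕ) (y x : ℝ) :
    HasDerivAt (fun u : ℝ => Real.exp (-(u+y)/2) * P n m k u y)
      (Real.exp (-(x+y)/2) * (-(1/2)) * P n m k x y +
        Real.exp (-(x+y)/2) *
          ∑ s ∈ range (n+1), ∑ i ∈ range (m+1), c n m k s i * (s * x^(s-1)) * y^i) x := by
  have h1 : HasDerivAt (fun u : ℝ => -(u+y)/2) (-(1/2)) x := by
    have h : (fun u : ℝ => -(u+y)/2) = fun u => (-(1/2)) * u + (-(1/2)) * y := by
      funext u; ring
    rw [h]
    simpa using ((hasDerivAt_id x).const_mul (-(1/2):ℝ)).add_const (-(1/2)*y)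
  have h2 := h1.exp
  have h3 : HasDerivAt (fun u : ℝ => P n m k u y)
      (∑ s ∈ range (n+1), ∑ i ∈ range (m+1), c n m k s i * (s * x^(s-1)) * y^i) x := by
    unfold P
    apply HasDerivAt.fun_sum
    intro s _
    apply HasDerivAt.fun_sum
    intro i _
    exact ((hasDerivAt_pow s x).const_mul (c n m k s i)).mul_const (y ^ i)
  exact h2.mul h3

lemma hasDerivAt_y (n m k : ℕ) (x y : ℝ) :
    HasDerivAt (fun v : ℝ => Real.exp (-(x+v)/2) * P n m k x v)
      (Real.exp (-(x+y)/2) * (-(1/2)) * P n m k x y +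
        Real.exp (-(x+y)/2) *
          ∑ s ∈ range (n+1), ∑ i ∈ range (m+1), c n m k s i * x^s * (i * y^(i-1))) y := by
  have h1 : HasDerivAt (fun v : ℝ => -(x+v)/2) (-(1/2)) y := by
    have h : (fun v : ℝ => -(x+v)/2) = fun v => (-(1/2)) * v + (-(1/2)) * x := by
      funext v; ring
    rw [h]
    simpa using ((hasDerivAt_id y).const_mul (-(1/2):ℝ)).add_const (-(1/2)*x)
  have h2 := h1.exp
  have h3 : HasDerivAt (fun v : ℝ => P n m k x v)
      (∑ s ∈ range (n+1), ∑ i ∈ range (m+1), c n m k s i * x^s * (i * y^(i-1))) y := by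
    unfold P
    apply HasDerivAt.fun_sum
    intro s _
    apply HasDerivAt.fun_sum
    intro i _
    exact (hasDerivAt_pow i y).const_mul (c n m k s i * x^s)
  exact h2.mul h3

lemma shift_x (n m k : ℕ) (x y : ℝ) :
    ∑ s ∈ range (n+1), ∑ i ∈ range (m+1), c n m k s i * (s * x^(s-1)) * y^i
    = ∑ s ∈ range (n+1), ∑ i ∈ range (m+1), (s+1 : ℝ) * c n m k (s+1) i * x^s * y^i := by
  conv_lhs => rw [Finset.sum_range_succ']
  conv_rhs => rw [Finset.sum_range_succ]
  have h0 : ∑ i ∈ range (m+1), c n m k 0 i * ((0:ℕ) * x^(0-1)) * y^i = 0 := by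
    apply Finset.sum_eq_zero
    intro i _
    simp
  have hn : ∑ i ∈ range (m+1), ((n:ℝ)+1) * c n m k (n+1) i * x^n * y^i = 0 := by
    apply Finset.sum_eq_zero
    intro i _
    rw [c_zero n m k (n+1) i (by omega)]
    ring
  rw [h0, hn, add_zero, add_zero]
  apply Finset.sum_congr rfl
  intro s _
  apply Finset.sum_congr rfl
  intro i _
  have : s + 1 - 1 = s := rfl
  rw [this]
  push_cast
  ring

lemma shift_y (n m k : ℕ) (s : ℕ) (x y : ℝ) :
    ∑ i ∈ range (m+1), c n m k s i * x^s * ((i:ℕ) * y^(i-1))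
    = ∑ i ∈ range (m+1), (i+1 : ℝ) * c n m k s (i+1) * x^s * y^i := by
  rw [Finset.sum_range_succ', Finset.sum_range_succ]
  have h0 : c n m k s 0 * x^s * ((0:ℕ) * y^(0-1)) = 0 := by simp
  have hn : ((m:ℝ)+1) * c n m k s (m+1) * x^s * y^m = 0 := by
    rw [c_zero n m k s (m+1) (by omega)]
    ring
  rw [h0, hn, add_zero, add_zero]
  apply Finset.sum_congr rfl
  intro i _
  have : i + 1 - 1 = i := rfl
  rw [this]
  push_cast
  ring

lemma P_succ (n m k : ℕ) (x y : ℝ) :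
    P n m (k+1) x y = -P n m k x y
      + (∑ s ∈ range (n+1), ∑ i ∈ range (m+1), c n m k s i * (s * x^(s-1)) * y^i)
      + (∑ s ∈ range (n+1), ∑ i ∈ range (m+1), c n m k s i * x^s * ((i:ℕ) * y^(i-1))) := by
  rw [shift_x]
  have : ∀ s ∈ range (n+1), ∑ i ∈ range (m+1), c n m k s i * x^s * ((i:ℕ) * y^(i-1))
      = ∑ i ∈ range (m+1), (i+1 : ℝ) * c n m k s (i+1) * x^s * y^i := fun s _ => shift_y n m k s x y
  rw [Finset.sum_congr rfl this]
  unfold P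
  simp only [c]
  calc ∑ s ∈ range (n+1), ∑ i ∈ range (m+1),
        (-c n m k s i + ((s:ℕ)+1) * c n m k (s+1) i + ((i:ℕ)+1) * c n m k s (i+1)) * x^s * y^i
      = ∑ s ∈ range (n+1), ∑ i ∈ range (m+1),
        (-(c n m k s i * x^s * y^i) + ((s:ℝ)+1) * c n m k (s+1) i * x^s * y^i
          + ((i:ℝ)+1) * c n m k s (i+1) * x^s * y^i) := by
        apply Finset.sum_congr rfl
        intro s _
        apply Finset.sum_congr rfl
        intro i _
        push_cast
        ring
    _ = _ := by
        simp only [Finset.sum_add_distrib, Finset.sum_neg_distrib]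

lemma key (n m : ℕ) : ∀ k (x y : ℝ),
    (Dpartial^[k] (fun a b => Real.exp (-(a + b) / 2) * a ^ n * b ^ m)) x y
      = Real.exp (-(x+y)/2) * P n m k x y := by
  intro k
  induction k with
  | zero =>
    intro x y
    simp only [Function.iterate_zero, id_eq]
    unfold P
    simp only [c]
    rw [Finset.sum_eq_single n]
    · rw [Finset.sum_eq_single m]
      · rw [if_pos ⟨rfl, rfl⟩]
        ring
      · intro b _ hb
        rw [if_neg (by tauto)]
        ring
      · intro h
        exact absurd (Finset.self_mem_range_succ m) h
    · intro b _ hb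
      apply Finset.sum_eq_zero
      intro i _
      rw [if_neg (by tauto)]
      ring
    · intro h
      exact absurd (Finset.self_mem_range_succ n) h
  | succ k ih =>
    intro x y
    rw [Function.iterate_succ_apply']
    have hg : (Dpartial^[k] (fun a b => Real.exp (-(a + b) / 2) * a ^ n * b ^ m))
        = fun u v => Real.exp (-(u+v)/2) * P n m k u v := by
      funext u v
      exact ih u v
    rw [hg]
    show deriv (fun u => Real.exp (-(u+y)/2) * P n m k u y) x
        + deriv (fun v => Real.exp (-(x+v)/2) * P n m k x v) y
        = Real.exp (-(x+y)/2) * P n m (k+1) x y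
    rw [(hasDerivAt_x n m k y x).deriv, (hasDerivAt_y n m k x y).deriv, P_succ]
    ring

lemma coeff (n m s i : ℕ) (hs : s ≤ n) (hi : i ≤ m) :
    (1 / ((n.factorial:ℝ) * m.factorial)) * c n m (n+m) s i
    = ((-1:ℝ)^(i+s) / ((i.factorial:ℝ) * s.factorial)) * ((m+n).choose (m-i) : ℕ)
        * (((n+i).choose (n-s) : ℕ) : ℝ) := by
  rw [c_closed n m (n+m) s i hs hi]
  obtain ⟨a, rfl⟩ : ∃ a, n = s + a := ⟨n - s, by omega⟩
  obtain ⟨b, rfl⟩ : ∃ b, m = i + b := ⟨m - i, by omega⟩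
  simp only [Nat.add_sub_cancel_left]
  have hsign : (-1:ℝ)^((s+a)+(i+b) + a + b) = (-1:ℝ)^(i+s) := by
    rw [show (s+a)+(i+b)+a+b = (i+s) + 2*(a+b) by ring, pow_add, pow_mul]
    simp
  rw [hsign]
  rw [show (i+b)+(s+a) = (s+a)+(i+b) by ring]
  have hc1 : (((s+a)+(i+b)).choose (a+b) : ℝ)
      = ((s+a)+(i+b)).factorial / ((a+b).factorial * (s+i).factorial) := by
    rw [Nat.cast_choose ℝ (show a+b ≤ (s+a)+(i+b) by omega),
      show (s+a)+(i+b) - (a+b) = s+i by omega]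
  have hc2 : ((s+a).choose s : ℝ) = (s+a).factorial / (s.factorial * a.factorial) := by
    rw [Nat.cast_choose ℝ (show s ≤ s+a by omega), Nat.add_sub_cancel_left]
  have hc3 : ((i+b).choose i : ℝ) = (i+b).factorial / (i.factorial * b.factorial) := by
    rw [Nat.cast_choose ℝ (show i ≤ i+b by omega), Nat.add_sub_cancel_left]
  have hc4 : (((s+a)+(i+b)).choose b : ℝ)
      = ((s+a)+(i+b)).factorial / (b.factorial * ((s+a)+i).factorial) := by
    rw [Nat.cast_choose ℝ (show b ≤ (s+a)+(i+b) by omega),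
      show (s+a)+(i+b) - b = (s+a)+i by omega]
  have hc5 : (((s+a)+i).choose a : ℝ)
      = ((s+a)+i).factorial / (a.factorial * (s+i).factorial) := by
    rw [Nat.cast_choose ℝ (show a ≤ (s+a)+i by omega),
      show (s+a)+i - a = s+i by omega]
  push_cast
  rw [hc1, hc2, hc3, hc4, hc5]
  have f1 : ((s+a).factorial : ℝ) ≠ 0 := by positivity
  have f2 : ((i+b).factorial : ℝ) ≠ 0 := by positivity
  have f3 : ((a+b).factorial : ℝ) ≠ 0 := by positivity
  have f4 : ((s+i).factorial : ℝ) ≠ 0 := by positivity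
  have f5 : (s.factorial : ℝ) ≠ 0 := by positivity
  have f6 : (a.factorial : ℝ) ≠ 0 := by positivity
  have f7 : (i.factorial : ℝ) ≠ 0 := by positivity
  have f8 : (b.factorial : ℝ) ≠ 0 := by positivity
  have f9 : (((s+a)+i).factorial : ℝ) ≠ 0 := by positivity
  field_simp

theorem stmt_1 (n m : ℕ) (x y : ℝ) :
    (1 / ((n.factorial : ℝ) * (m.factorial : ℝ))) * Real.exp ((x + y) / 2) *
      (Dpartial^[n + m] (fun a b => Real.exp (-(a + b) / 2) * a ^ n * b ^ m)) x y =
    ∑ i ∈ Finset.range (m + 1), ∑ s ∈ Finset.range (n + 1),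
      ((-1 : ℝ) ^ (i + s) / ((i.factorial : ℝ) * (s.factorial : ℝ))) *
        ((m + n).choose (m - i) : ℝ) * ((n + i).choose (n - s) : ℝ) *
        x ^ s * y ^ i := by
  rw [key n m (n+m) x y]
  have hexp : Real.exp ((x+y)/2) * Real.exp (-(x+y)/2) = 1 := by
    rw [← Real.exp_add, show (x+y)/2 + -(x+y)/2 = 0 by ring, Real.exp_zero]
  have step1 : (1 / ((n.factorial : ℝ) * (m.factorial : ℝ))) * Real.exp ((x + y) / 2) *
      (Real.exp (-(x+y)/2) * P n m (n+m) x y)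
      = (1 / ((n.factorial : ℝ) * (m.factorial : ℝ))) * P n m (n+m) x y := by
    linear_combination (1 / ((n.factorial : ℝ) * m.factorial) * P n m (n+m) x y) * hexp
  rw [step1]
  unfold P
  rw [Finset.sum_comm, Finset.mul_sum]
  apply Finset.sum_congr rfl
  intro i hi
  rw [Finset.mul_sum]
  apply Finset.sum_congr rfl
  intro s hs
  have hs' : s ≤ n := by simpa [Nat.lt_succ_iff] using Finset.mem_range.mp hs
  have hi' : i ≤ m := by simpa [Nat.lt_succ_iff] using Finset.mem_range.mp hi
  have := coeff n m s i hs' hi'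
  linear_combination (x^s * y^i) * this
end

section
/- For all natural numbers n, m, the two-variable Laguerre polynomial is symmetric under simultaneously swapping the indices and the variables: 𝕃_{n,m}(X,Y) = 𝕃_{m,n}(Y,X) in ℤ[X,Y]. -/
open Polynomial MvPolynomial

/-- The scaled generalized Laguerre polynomial `ℒ_n^α(X) = n! · L_n^α(X) ∈ ℤ[X]`. -/
noncomputable def sLag (n α : ℕ) : Polynomial ℤ :=
  ∑ j ∈ Finset.range (n + 1),
    Polynomial.C ((-1 : ℤ) ^ j * ((n.factorial / j.factorial : ℕ) : ℤ) *
      ((n + α).choose (n - j) : ℤ)) * Polynomial.X ^ j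

/-- The scaled two-variable Laguerre polynomial
`𝕃_{n,m}(X,Y) = n!·m!·L_{n,m}(X,Y) ∈ ℤ[X,Y]`, with `X = X 0` and `Y = X 1`. -/
noncomputable def sLag2 (n m : ℕ) : MvPolynomial (Fin 2) ℤ :=
  ∑ i ∈ Finset.range (m + 1), ∑ s ∈ Finset.range (n + 1),
    MvPolynomial.C ((-1 : ℤ) ^ (i + s) * ((m.factorial / i.factorial : ℕ) : ℤ) *
        ((n.factorial / s.factorial : ℕ) : ℤ) *
        ((m + n).choose (m - i) : ℤ) * ((n + i).choose (n - s) : ℤ)) *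
      MvPolynomial.X 0 ^ s * MvPolynomial.X 1 ^ i

lemma choose_sub_swap (N a b : ℕ) (h : a + b ≤ N) :
    N.choose a * (N - a).choose b = N.choose b * (N - b).choose a := by
  have h1 : a ≤ N - b := by omega
  have key := Nat.choose_mul (n := N) h1
  rw [Nat.choose_symm (by omega : b ≤ N)] at key
  have h2 : N - b - a = N - a - b := by omega
  rw [h2, Nat.choose_symm (by omega : b ≤ N - a)] at key
  exact key.symm

/-- `𝕃_{n,m}(X,Y) = 𝕃_{m,n}(Y,X)`: swapping both the indices and the variables
leaves the two-variable Laguerre polynomial unchanged. -/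
theorem stmt_3 (n m : ℕ) :
    sLag2 n m = MvPolynomial.rename (Equiv.swap (0 : Fin 2) 1) (sLag2 m n) := by
  unfold sLag2
  simp only [map_sum, map_mul, map_pow, rename_C, rename_X,
    Equiv.swap_apply_left, Equiv.swap_apply_right]
  rw [Finset.sum_comm]
  refine Finset.sum_congr rfl fun i hi => Finset.sum_congr rfl fun s hs => ?_
  rw [Finset.mem_range] at hi hs
  have hkey : (m + n).choose (m - s) * (n + s).choose (n - i)
      = (n + m).choose (n - i) * (m + i).choose (m - s) := by
    have h1 : n + s = (m + n) - (m - s) := by omega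
    have h2 : m + i = (m + n) - (n - i) := by omega
    rw [h1, h2, choose_sub_swap (m + n) (m - s) (n - i) (by omega), Nat.add_comm m n]
  have hC : (MvPolynomial.C (((m + n).choose (m - s) : ℤ)) : MvPolynomial (Fin 2) ℤ) *
        MvPolynomial.C (((n + s).choose (n - i) : ℤ))
      = MvPolynomial.C (((n + m).choose (n - i) : ℤ)) *
        MvPolynomial.C (((m + i).choose (m - s) : ℤ)) := by
    rw [← MvPolynomial.C_mul, ← MvPolynomial.C_mul]
    exact_mod_cast congrArg (MvPolynomial.C ∘ (Nat.cast : ℕ → ℤ)) hkey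
  linear_combination (MvPolynomial.C (-1 : ℤ)) ^ (i + s) *
    MvPolynomial.C (((m.factorial / s.factorial : ℕ)) : ℤ) *
    MvPolynomial.C (((n.factorial / i.factorial : ℕ)) : ℤ) *
    MvPolynomial.X 0 ^ i * MvPolynomial.X 1 ^ s * hC
end

section
/- For all natural numbers n, m, all positive integers q, all i with q ≤ i ≤ m+q, and all nonzero integers p, the polynomial congruence (i−q+1−p)_{m−(i−q)} · ℒ_n^i(X) ≡ (i−q+1)_{m−(i−q)} · ℒ_n^{i−q}(X) (mod gcd(p,q)) holds in ℤ[X]. -/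
open Polynomial MvPolynomial

lemma sLag_coeff (n α k : ℕ) : (sLag n α).coeff k =
    if k ∈ Finset.range (n + 1) then
      (-1 : ℤ) ^ k * ((n.factorial / k.factorial : ℕ) : ℤ) * ((n + α).choose (n - k) : ℤ)
    else 0 := by
  simp only [sLag, Polynomial.finset_sum_coeff, Polynomial.coeff_C_mul, Polynomial.coeff_X_pow,
    mul_ite, mul_one, mul_zero]
  rw [Finset.sum_ite_eq]

lemma fac_choose (n α k : ℕ) (hk : k ≤ n) :
    (n.factorial / k.factorial) * (n + α).choose (n - k)
      = n.choose k * (ascPochhammer ℕ (n - k)).eval (α + k + 1) := by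
  have h1 : n.factorial / k.factorial = n.choose k * (n - k).factorial := by
    have h := Nat.choose_mul_factorial_mul_factorial hk
    rw [← h, mul_comm (n.choose k) k.factorial, mul_assoc,
      Nat.mul_div_cancel_left _ k.factorial_pos]
  rw [h1, ascPochhammer_nat_eq_ascFactorial, Nat.ascFactorial_eq_factorial_mul_choose]
  have h2 : α + k + (n - k) = n + α := by omega
  rw [h2]; ring

lemma cast_poch_eval (d s : ℕ) (a : ℤ) :
    (((ascPochhammer ℤ s).eval a : ℤ) : ZMod d)
      = (ascPochhammer (ZMod d) s).eval ((a : ℤ) : ZMod d) := by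
  have := Polynomial.eval₂_at_apply (p := ascPochhammer ℤ s) (Int.castRingHom (ZMod d)) a
  rw [Polynomial.eval₂_eq_eval_map, ascPochhammer_map] at this
  simpa using this.symm

theorem stmt_6 (n m : ℕ) (q : ℕ) (hq : 0 < q) (i : ℕ) (hqi : q ≤ i) (him : i ≤ m + q)
    (p : ℤ) (hp : p ≠ 0) :
    ∀ k : ℕ, (Int.gcd p (q : ℤ) : ℤ) ∣
      (Polynomial.C ((ascPochhammer ℤ (m - (i - q))).eval ((i : ℤ) - q + 1 - p)) * sLag n i -
        Polynomial.C ((ascPochhammer ℤ (m - (i - q))).eval ((i : ℤ) - q + 1)) *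
          sLag n (i - q)).coeff k := by
  intro k
  rw [← ZMod.intCast_zmod_eq_zero_iff_dvd]
  set d : ℕ := Int.gcd p (q : ℤ) with hd
  have hp0 : ((p : ℤ) : ZMod d) = 0 :=
    (ZMod.intCast_zmod_eq_zero_iff_dvd _ _).2 (Int.gcd_dvd_left p (q : ℤ))
  have hq0 : (q : ZMod d) = 0 := by
    have := (ZMod.intCast_zmod_eq_zero_iff_dvd ((q : ℕ) : ℤ) d).2 (Int.gcd_dvd_right p (q : ℤ))
    push_cast at this
    exact this
  rw [Polynomial.coeff_sub, Polynomial.coeff_C_mul, Polynomial.coeff_C_mul, sLag_coeff, sLag_coeff]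
  by_cases hk : k ∈ Finset.range (n + 1)
  · have hkn : k ≤ n := Nat.lt_succ_iff.mp (Finset.mem_range.mp hk)
    rw [if_pos hk, if_pos hk]
    have c1 : ((n.factorial / k.factorial : ℕ) : ℤ) * ((n + i).choose (n - k) : ℤ)
        = (n.choose k : ℤ) * (ascPochhammer ℤ (n - k)).eval ((i : ℤ) + k + 1) := by
      rw [← Nat.cast_mul, fac_choose n i k hkn, Nat.cast_mul, ascPochhammer_eval_cast]
      push_cast
      rfl
    have c2 : ((n.factorial / k.factorial : ℕ) : ℤ) * ((n + (i - q)).choose (n - k) : ℤ)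
        = (n.choose k : ℤ) * (ascPochhammer ℤ (n - k)).eval ((i : ℤ) - q + k + 1) := by
      rw [← Nat.cast_mul, fac_choose n (i - q) k hkn, Nat.cast_mul, ascPochhammer_eval_cast]
      push_cast [Nat.cast_sub hqi]
      rfl
    rw [mul_assoc ((-1 : ℤ) ^ k), c1, mul_assoc ((-1 : ℤ) ^ k), c2]
    push_cast [cast_poch_eval]
    rw [hp0, hq0]
    ring
  · rw [if_neg hk, if_neg hk]
    push_cast
    ring_nf
end

section
/- For all natural numbers n, m and all positive integers q, the polynomial congruence ℒ_n^{m+q}(X) ≡ ℒ_n^{m}(X) (mod q) holds in ℤ[X]. -/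
open Polynomial MvPolynomial

lemma fact_prod_aux (α j n : ℕ) (hj : j ≤ n) :
    (α + j).factorial * ∏ i ∈ Finset.Ico j n, (α + i + 1) = (α + n).factorial := by
  induction n, hj using Nat.le_induction with
  | base => simp
  | succ n hn ih =>
    rw [Finset.prod_Ico_succ_top hn, ← mul_assoc, ih]
    rw [show α + (n + 1) = (α + n) + 1 from by ring, Nat.factorial_succ]
    ring

lemma key_aux (n j α : ℕ) (hj : j ≤ n) :
    n.factorial / j.factorial * (n + α).choose (n - j) =
      n.choose j * ∏ i ∈ Finset.Ico j n, (α + i + 1) := by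
  have h1 : 0 < j.factorial * ((α + j).factorial * (n - j).factorial) :=
    Nat.mul_pos j.factorial_pos (Nat.mul_pos (α + j).factorial_pos (n - j).factorial_pos)
  apply Nat.eq_of_mul_eq_mul_right h1
  have hd : j.factorial ∣ n.factorial := Nat.factorial_dvd_factorial hj
  have hnj : n - j ≤ n + α := le_trans (Nat.sub_le n j) (Nat.le_add_right n α)
  have hsub : n + α - (n - j) = α + j := by omega
  calc n.factorial / j.factorial * (n + α).choose (n - j) *
        (j.factorial * ((α + j).factorial * (n - j).factorial))
      = (n.factorial / j.factorial * j.factorial) *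
        ((n + α).choose (n - j) * (n - j).factorial * (α + j).factorial) := by ring
    _ = n.factorial * (n + α).factorial := by
        rw [Nat.div_mul_cancel hd]
        rw [show (α + j) = n + α - (n - j) from hsub.symm,
          Nat.choose_mul_factorial_mul_factorial hnj]
    _ = (n.choose j * j.factorial * (n - j).factorial) *
        ((α + j).factorial * ∏ i ∈ Finset.Ico j n, (α + i + 1)) := by
        rw [fact_prod_aux α j n hj, Nat.choose_mul_factorial_mul_factorial hj,
          Nat.add_comm α n]
    _ = (n.choose j * ∏ i ∈ Finset.Ico j n, (α + i + 1)) *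
        (j.factorial * ((α + j).factorial * (n - j).factorial)) := by ring

theorem stmt_7 (n m : ℕ) (q : ℕ) (hq : 0 < q) :
    ∀ k : ℕ, (q : ℤ) ∣ (sLag n (m + q) - sLag n m).coeff k := by
  intro k
  rcases le_or_gt k n with hk | hk
  · unfold sLag
    rw [Polynomial.coeff_sub]
    simp only [Polynomial.finset_sum_coeff, Polynomial.coeff_C_mul, Polynomial.coeff_X_pow,
      mul_ite, mul_one, mul_zero, Finset.sum_ite_eq, Finset.mem_range,
      if_pos (Nat.lt_succ_of_le hk)]
    rw [show (-1 : ℤ) ^ k * ((n.factorial / k.factorial : ℕ) : ℤ) *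
          ((n + (m + q)).choose (n - k) : ℤ) -
        (-1 : ℤ) ^ k * ((n.factorial / k.factorial : ℕ) : ℤ) * ((n + m).choose (n - k) : ℤ)
        = (-1 : ℤ) ^ k * (((n.factorial / k.factorial * (n + (m + q)).choose (n - k) : ℕ) : ℤ)
          - ((n.factorial / k.factorial * (n + m).choose (n - k) : ℕ) : ℤ)) from by
      push_cast; ring]
    rw [key_aux n k (m + q) hk, key_aux n k m hk]
    apply Dvd.dvd.mul_left
    have : NeZero q := ⟨hq.ne'⟩
    rw [← ZMod.intCast_zmod_eq_zero_iff_dvd]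
    push_cast
    rw [sub_eq_zero]
    congr 1
    apply Finset.prod_congr rfl
    intro i _
    simp [ZMod.natCast_self]
  · have h0 : ∀ α : ℕ, (sLag n α).coeff k = 0 := by
      intro α
      unfold sLag
      simp only [Polynomial.finset_sum_coeff, Polynomial.coeff_C_mul, Polynomial.coeff_X_pow]
      apply Finset.sum_eq_zero
      intro j hj
      have hj' : j < n + 1 := Finset.mem_range.mp hj
      rw [if_neg (by omega : ¬ k = j), mul_zero]
    simp [Polynomial.coeff_sub, h0]
end

section
/- For all natural numbers m, n, all positive integers q, all nonzero integers p, and all i with q ≤ i ≤ m+q, the congruence C(m, m+q−i) · (n+p+i−q+1)_{m−(i−q)} ≡ C(m+n, m+q−i) · (i−q−p+1)_{m−(i−q)} (mod gcd(p,q)) holds in ℤ. -/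
open Polynomial

lemma aux_nat_id (j k n : ℕ) :
    (j + k).choose k * (j + n + 1).ascFactorial k
      = (j + k + n).choose k * (j + 1).ascFactorial k := by
  rw [Nat.ascFactorial_eq_factorial_mul_choose, Nat.ascFactorial_eq_factorial_mul_choose]
  have h1 : j + n + k = j + k + n := by omega
  rw [h1]
  ring

lemma aux_int_id (m n j k : ℕ) (h : j + k = m) :
    (m.choose k : ℤ) * (ascPochhammer ℤ k).eval ((n : ℤ) + j + 1)
      = ((m + n).choose k : ℤ) * (ascPochhammer ℤ k).eval ((j : ℤ) + 1) := by
  have e1 : ((n : ℤ) + j + 1) = ((j + n + 1 : ℕ) : ℤ) := by push_cast; ring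
  have e2 : ((j : ℤ) + 1) = ((j + 1 : ℕ) : ℤ) := by push_cast; ring
  rw [e1, e2, ← ascPochhammer_eval_cast, ← ascPochhammer_eval_cast,
    ascPochhammer_nat_eq_ascFactorial, ascPochhammer_nat_eq_ascFactorial]
  subst h
  exact_mod_cast congrArg (Nat.cast : ℕ → ℤ) (aux_nat_id j k n)

theorem stmt_8 (m n : ℕ) (q : ℕ) (hq : 0 < q) (p : ℤ) (hp : p ≠ 0)
    (i : ℕ) (hqi : q ≤ i) (him : i ≤ m + q) :
    (Int.gcd p (q : ℤ) : ℤ) ∣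
      (m.choose (m + q - i) : ℤ) *
          (ascPochhammer ℤ (m - (i - q))).eval ((n : ℤ) + p + i - q + 1) -
        ((m + n).choose (m + q - i) : ℤ) *
          (ascPochhammer ℤ (m - (i - q))).eval ((i : ℤ) - q - p + 1) := by
  obtain ⟨j, rfl⟩ : ∃ j, i = q + j := ⟨i - q, by omega⟩
  have h1 : m + q - (q + j) = m - j := by omega
  have h2 : q + j - q = j := by omega
  rw [h1, h2]
  set k := m - j with hk
  have hjk : j + k = m := by omega
  have a1 : (n : ℤ) + p + (q + j : ℕ) - q + 1 = ((n : ℤ) + j + 1) + p := by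
    push_cast; ring
  have a2 : ((q + j : ℕ) : ℤ) - q - p + 1 = ((j : ℤ) + 1) - p := by
    push_cast; ring
  rw [a1, a2]
  have hdp : (Int.gcd p (q : ℤ) : ℤ) ∣ p := Int.gcd_dvd_left p (q : ℤ)
  have d1 : (Int.gcd p (q : ℤ) : ℤ) ∣
      (ascPochhammer ℤ k).eval (((n : ℤ) + j + 1) + p)
        - (ascPochhammer ℤ k).eval ((n : ℤ) + j + 1) := by
    refine hdp.trans ?_
    have := Polynomial.sub_dvd_eval_sub (((n : ℤ) + j + 1) + p) ((n : ℤ) + j + 1)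
      (ascPochhammer ℤ k)
    simpa using this
  have d2 : (Int.gcd p (q : ℤ) : ℤ) ∣
      (ascPochhammer ℤ k).eval (((j : ℤ) + 1) - p)
        - (ascPochhammer ℤ k).eval ((j : ℤ) + 1) := by
    refine (hdp.neg_right).trans ?_
    have := Polynomial.sub_dvd_eval_sub (((j : ℤ) + 1) - p) ((j : ℤ) + 1)
      (ascPochhammer ℤ k)
    simpa using this
  have key := aux_int_id m n j k hjk
  have heq : (m.choose k : ℤ) * (ascPochhammer ℤ k).eval (((n : ℤ) + j + 1) + p)
      - ((m + n).choose k : ℤ) * (ascPochhammer ℤ k).eval (((j : ℤ) + 1) - p)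
      = (m.choose k : ℤ) * ((ascPochhammer ℤ k).eval (((n : ℤ) + j + 1) + p)
          - (ascPochhammer ℤ k).eval ((n : ℤ) + j + 1))
        - ((m + n).choose k : ℤ) * ((ascPochhammer ℤ k).eval (((j : ℤ) + 1) - p)
          - (ascPochhammer ℤ k).eval ((j : ℤ) + 1)) := by
    linear_combination key
  rw [heq]
  exact dvd_sub (d1.mul_left _) (d2.mul_left _)
end

section
/- For all natural numbers i and all positive integers p, the polynomial congruence ℒ_p^i(X) ≡ (−1)^p X^p (mod p) holds in ℤ[X]. -/
open Polynomial MvPolynomial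

theorem stmt_11 (i : ℕ) (p : ℕ) (hp : 0 < p) :
    ∀ k : ℕ, (p : ℤ) ∣
      (sLag p i - Polynomial.C ((-1 : ℤ) ^ p) * Polynomial.X ^ p).coeff k := by
  intro k
  simp only [sLag, Polynomial.coeff_sub, Polynomial.finset_sum_coeff,
    Polynomial.coeff_C_mul, Polynomial.coeff_X_pow, mul_ite, mul_one, mul_zero,
    Finset.sum_ite_eq (Finset.range (p + 1)) k, Finset.mem_range]
  by_cases hk : k < p + 1
  · simp only [hk, if_pos]
    rcases eq_or_lt_of_le (Nat.lt_succ_iff.mp hk) with h | h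
    · subst h
      simp [Nat.div_self (Nat.factorial_pos k)]
    · rw [if_neg h.ne]
      have hdvd : (p : ℕ) ∣ p.factorial / k.factorial := by
        have h1 : k.factorial ∣ (p - 1).factorial :=
          Nat.factorial_dvd_factorial (by omega)
        have h2 : p.factorial = p * (p - 1).factorial := by
          cases p with
          | zero => omega
          | succ q => simp [Nat.factorial_succ]
        rw [h2, Nat.mul_div_assoc p h1]
        exact Dvd.intro _ rfl
      have : (p : ℤ) ∣ ((p.factorial / k.factorial : ℕ) : ℤ) :=
        Int.natCast_dvd_natCast.mpr hdvd
      rw [sub_zero]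
      exact Dvd.dvd.mul_right (Dvd.dvd.mul_left this _) _
  · have h1 : ¬ k = p := by omega
    simp [hk, h1]
end

section
/- For all natural numbers n, i and all positive integers p, the polynomial congruence ℒ_{n+p}^i(X) ≡ (−1)^p X^p · ℒ_n^i(X) (mod p) holds in ℤ[X]. -/
open Polynomial MvPolynomial

private lemma coeff_sLag (n α k : ℕ) :
    (sLag n α).coeff k = if k ≤ n then
      (-1 : ℤ) ^ k * ((n.factorial / k.factorial : ℕ) : ℤ) * (((n + α).choose (n - k) : ℕ) : ℤ)
    else 0 := by
  simp only [sLag, Polynomial.finset_sum_coeff, Polynomial.coeff_C_mul, Polynomial.coeff_X_pow,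
    mul_ite, mul_one, mul_zero, Finset.sum_ite_eq, Finset.mem_range, Nat.lt_succ_iff]

/-- ascending factorials shifted by `p` are congruent mod `p`. -/
private lemma asc_shift_dvd (p a r : ℕ) :
    (p : ℤ) ∣ ((a + p).ascFactorial r : ℤ) - (a.ascFactorial r : ℤ) := by
  induction r with
  | zero => simp
  | succ r ih =>
    have h : (((a + p).ascFactorial (r + 1) : ℤ) - (a.ascFactorial (r + 1) : ℤ))
        = ((a : ℤ) + p + r) * (((a + p).ascFactorial r : ℤ) - (a.ascFactorial r : ℤ))
          + (p : ℤ) * (a.ascFactorial r : ℤ) := by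
      push_cast [Nat.ascFactorial_succ]
      ring
    rw [h]
    exact dvd_add (ih.mul_left _) (Dvd.intro _ rfl)

private lemma dvd_asc (p : ℕ) : ∀ (r a : ℕ), a ≤ p → p < a + r → p ∣ a.ascFactorial r := by
  intro r
  induction r with
  | zero => intro a h1 h2; omega
  | succ r ih =>
    intro a h1 h2
    rw [Nat.ascFactorial_succ]
    rcases lt_or_ge p (a + r) with h | h
    · exact Dvd.dvd.mul_left (ih a h1 h) _
    · have : a + r = p := by omega
      exact Dvd.dvd.mul_right (this ▸ dvd_refl p) _

theorem stmt_12 (n i : ℕ) (p : ℕ) (hp : 0 < p) :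
    ∀ k : ℕ, (p : ℤ) ∣
      (sLag (n + p) i - Polynomial.C ((-1 : ℤ) ^ p) * Polynomial.X ^ p * sLag n i).coeff k := by
  intro k
  have hre : Polynomial.C ((-1 : ℤ) ^ p) * Polynomial.X ^ p * sLag n i
      = Polynomial.C ((-1 : ℤ) ^ p) * sLag n i * Polynomial.X ^ p := by ring
  rw [Polynomial.coeff_sub, hre, Polynomial.coeff_mul_X_pow', Polynomial.coeff_C_mul,
    coeff_sLag, coeff_sLag]
  rcases lt_or_ge k p with hkp | hkp
  · -- k < p : second term vanishes, first term divisible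
    rw [if_neg (show ¬ p ≤ k by omega), sub_zero]
    have hkn : k ≤ n + p := by omega
    rw [if_pos hkn]
    -- p divides (n+p)!/k!
    have hfac : (n + p).factorial / k.factorial = (k + 1).ascFactorial (n + p - k) := by
      have := Nat.factorial_mul_ascFactorial k (n + p - k)
      rw [Nat.add_sub_cancel' hkn] at this
      rw [← this, Nat.mul_div_cancel_left _ k.factorial_pos]
    have hdvd : p ∣ (n + p).factorial / k.factorial := by
      rw [hfac]
      exact dvd_asc p (n + p - k) (k + 1) (by omega) (by omega)
    exact Dvd.dvd.mul_right ((Int.natCast_dvd_natCast.mpr hdvd).mul_left _) _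
  · obtain ⟨j, rfl⟩ := Nat.exists_eq_add_of_le hkp
    rw [if_pos hkp, Nat.add_sub_cancel_left]
    rcases le_or_gt j n with hjn | hjn
    · -- main case
      rw [if_pos (show p + j ≤ n + p by omega), if_pos hjn]
      set r := n - j with hr
      have hk1 : j + p + r = n + p := by omega
      have hk2 : j + r = n := by omega
      -- nat identities
      have eA : (n + p).factorial / (p + j).factorial = (j + p + 1).ascFactorial r := by
        have := Nat.factorial_mul_ascFactorial (j + p) r
        rw [hk1] at this
        rw [← this, show p + j = j + p from Nat.add_comm p j,
          Nat.mul_div_cancel_left _ (j + p).factorial_pos]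
      have eC : n.factorial / j.factorial = (j + 1).ascFactorial r := by
        have := Nat.factorial_mul_ascFactorial j r
        rw [hk2] at this
        rw [← this, Nat.mul_div_cancel_left _ j.factorial_pos]
      have eA' : (j + p + 1).ascFactorial r = r.factorial * (n + p).choose r := by
        rw [Nat.ascFactorial_eq_factorial_mul_choose, hk1]
      have eC' : (j + 1).ascFactorial r = r.factorial * n.choose r := by
        rw [Nat.ascFactorial_eq_factorial_mul_choose, hk2]
      have eB : (j + p + i + 1).ascFactorial r = r.factorial * (n + p + i).choose r := by
        rw [Nat.ascFactorial_eq_factorial_mul_choose]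
        congr 2
        omega
      have eD : (j + i + 1).ascFactorial r = r.factorial * (n + i).choose r := by
        rw [Nat.ascFactorial_eq_factorial_mul_choose]
        congr 2
        omega
      rw [eA, eC]
      have hsign : ((-1 : ℤ)) ^ (p + j) = (-1 : ℤ) ^ p * (-1 : ℤ) ^ j := pow_add _ _ _
      -- key algebraic decomposition
      have key : (((j + p + 1).ascFactorial r : ℤ)) * ((n + p + i).choose r : ℤ)
          - ((j + 1).ascFactorial r : ℤ) * ((n + i).choose r : ℤ)
          = ((n + p).choose r : ℤ) *
              (((j + i + p + 1).ascFactorial r : ℤ) - ((j + i + 1).ascFactorial r : ℤ))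
            + (((j + p + 1).ascFactorial r : ℤ) - ((j + 1).ascFactorial r : ℤ))
              * ((n + i).choose r : ℤ) := by
        have eB' : (j + i + p + 1).ascFactorial r = (j + p + i + 1).ascFactorial r := by
          congr 1; omega
        have h1 := congrArg (Nat.cast : ℕ → ℤ) eA'
        have h2 := congrArg (Nat.cast : ℕ → ℤ) eC'
        have h3 := congrArg (Nat.cast : ℕ → ℤ) (eB'.trans eB)
        have h4 := congrArg (Nat.cast : ℕ → ℤ) eD
        push_cast at h1 h2 h3 h4
        rw [h1, h2, h3, h4]
        ring
      have d1 : (p : ℤ) ∣ ((j + i + p + 1).ascFactorial r : ℤ) - ((j + i + 1).ascFactorial r : ℤ) := by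
        have := asc_shift_dvd p (j + i + 1) r
        rwa [show j + i + 1 + p = j + i + p + 1 by omega] at this
      have d2 : (p : ℤ) ∣ ((j + p + 1).ascFactorial r : ℤ) - ((j + 1).ascFactorial r : ℤ) := by
        have := asc_shift_dvd p (j + 1) r
        rwa [show j + 1 + p = j + p + 1 by omega] at this
      have dmain : (p : ℤ) ∣ (((j + p + 1).ascFactorial r : ℤ)) * ((n + p + i).choose r : ℤ)
          - ((j + 1).ascFactorial r : ℤ) * ((n + i).choose r : ℤ) := by
        rw [key]
        exact dvd_add (d1.mul_left _) (d2.mul_right _)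
      have hch1 : n + p - (p + j) = r := by omega
      rw [hch1]
      have heq : (-1 : ℤ) ^ (p + j) * ((j + p + 1).ascFactorial r : ℤ) * ((n + p + i).choose r : ℤ)
            - (-1 : ℤ) ^ p * ((-1 : ℤ) ^ j * ((j + 1).ascFactorial r : ℤ) * ((n + i).choose r : ℤ))
          = (-1 : ℤ) ^ (p + j) *
              (((j + p + 1).ascFactorial r : ℤ) * ((n + p + i).choose r : ℤ)
                - ((j + 1).ascFactorial r : ℤ) * ((n + i).choose r : ℤ)) := by
        rw [hsign]; ring
      rw [heq]
      exact dmain.mul_left _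
    · -- k > n + p : both terms vanish
      rw [if_neg (show ¬ p + j ≤ n + p by omega), if_neg (show ¬ j ≤ n by omega)]
      simp
end

section
/- For all natural numbers n, m and all positive integers p, q, the polynomial congruence 𝕃_{n+p,m+q}(X,Y) ≡ 𝕃_{n,m}(X,Y) · 𝕃_{p,q}(X,Y) (mod gcd(p,q)) holds in ℤ[X,Y]. (Equivalently, (n+p)!(m+q)!·L_{n+p,m+q}(x,y) ≡ n!m!·L_{n,m}(x,y) · p!q!·L_{p,q}(x,y) (mod gcd(p,q)).) -/
open Polynomial MvPolynomial Finset

def fc (K t : ℕ) : ℕ := K.factorial / t.factorial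

lemma fc_eq {K t : ℕ} (h : t ≤ K) : fc K t = K.choose t * (K - t).factorial := by
  have h1 := Nat.choose_mul_factorial_mul_factorial h
  unfold fc
  rw [← h1, mul_right_comm, Nat.mul_div_cancel _ (Nat.factorial_pos t)]

lemma fc_self (K : ℕ) : fc K K = 1 := by
  simp [fc_eq le_rfl]

lemma fc_zero_of_lt {K t : ℕ} (hK : 0 < K) (h : K < t) : fc K t = 0 :=
  Nat.div_eq_of_lt ((Nat.factorial_lt hK).2 h)

lemma fc_mul_fc (h1 : t ≤ b) (h2 : b ≤ K) : fc K t = fc K b * fc b t := by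
  unfold fc
  rw [Nat.div_mul_div_comm (Nat.factorial_dvd_factorial h2) (Nat.factorial_dvd_factorial h1)]
  rw [mul_comm b.factorial t.factorial, Nat.mul_div_mul_right _ _ (Nat.factorial_pos b)]

lemma dvd_fc_of_lt {B t : ℕ} (h : t < B) : B ∣ fc B t := by
  have hB : B = B - 1 + 1 := by omega
  have hdvd : t.factorial ∣ (B - 1).factorial := Nat.factorial_dvd_factorial (by omega)
  have : fc B t = B * ((B - 1).factorial / t.factorial) := by
    unfold fc
    rw [hB, Nat.factorial_succ, ← hB, Nat.mul_div_assoc _ hdvd]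
  rw [this]
  exact Dvd.intro _ rfl

-- key combinatorial identity
lemma L0 {n m s i : ℕ} (hs : s ≤ n) (hi : i ≤ m) :
    m.factorial / i.factorial * (n.factorial / s.factorial) *
      ((m + n).choose (m - i)) * ((n + i).choose (n - s)) =
    m.choose i * n.choose s * fc (m + n) (s + i) := by
  have e1 : m.factorial / i.factorial = m.choose i * (m - i).factorial := fc_eq hi
  have e2 : n.factorial / s.factorial = n.choose s * (n - s).factorial := fc_eq hs
  have hsi : s + i ≤ m + n := by omega
  rw [e1, e2, fc_eq hsi]
  apply Nat.eq_of_mul_eq_mul_right (Nat.factorial_pos (s + i))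
  have k1 : (n + i).choose (n - s) * (n - s).factorial * (s + i).factorial = (n + i).factorial := by
    have := Nat.choose_mul_factorial_mul_factorial (show n - s ≤ n + i by omega)
    have e : n + i - (n - s) = s + i := by omega
    rwa [e] at this
  have k2 : (m + n).choose (m - i) * (m - i).factorial * (n + i).factorial = (m + n).factorial := by
    have := Nat.choose_mul_factorial_mul_factorial (show m - i ≤ m + n by omega)
    have e : m + n - (m - i) = n + i := by omega
    rwa [e] at this
  have k3 : (m + n).choose (s + i) * (s + i).factorial * (m + n - (s + i)).factorial
      = (m + n).factorial := by
    have := Nat.choose_mul_factorial_mul_factorial hsi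
    linarith [this]
  calc m.choose i * (m - i).factorial * (n.choose s * (n - s).factorial) *
        (m + n).choose (m - i) * (n + i).choose (n - s) * (s + i).factorial
      = m.choose i * n.choose s * ((m - i).factorial *
          ((n + i).choose (n - s) * (n - s).factorial * (s + i).factorial) *
          (m + n).choose (m - i)) := by ring
    _ = m.choose i * n.choose s * ((m + n).choose (m - i) * (m - i).factorial * (n + i).factorial) := by
        rw [k1]; ring
    _ = m.choose i * n.choose s * (m + n).factorial := by rw [k2]
    _ = m.choose i * n.choose s * ((m + n).choose (s + i) * (s + i).factorial *
          (m + n - (s + i)).factorial) := by rw [k3]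
    _ = _ := by ring


-- p ∣ C(p,j) * (p-j)!  for j < p
lemma p_dvd_choose_mul_fact {p j : ℕ} (h : j < p) :
    p ∣ p.choose j * (p - j).factorial := by
  have key : p.choose j * (p - j).factorial * j.factorial = p.factorial := by
    have := Nat.choose_mul_factorial_mul_factorial h.le
    linarith [this]
  have hd : j.factorial ∣ (p - 1).factorial := Nat.factorial_dvd_factorial (by omega)
  have key2 : p.choose j * (p - j).factorial * j.factorial
      = p * ((p - 1).factorial / j.factorial) * j.factorial := by
    rw [key, mul_assoc, Nat.div_mul_cancel hd]
    conv_lhs => rw [show p = p - 1 + 1 by omega, Nat.factorial_succ]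
    congr 2
    omega
  have := Nat.eq_of_mul_eq_mul_right (Nat.factorial_pos j) key2
  rw [this]
  exact Dvd.intro _ rfl

-- d ∣ C(p,j) * C(q,k) * ((p-j) + (q-k))!
lemma key_dvd {d p q j k : ℕ} (hdp : d ∣ p) (hdq : d ∣ q)
    (hne : j < p ∨ k < q) :
    d ∣ p.choose j * q.choose k * (p - j + (q - k)).factorial := by
  set r := p - j + (q - k) with hr
  have hfact : r.factorial = r.choose (p - j) * (p - j).factorial * (q - k).factorial := by
    have := Nat.choose_mul_factorial_mul_factorial (show p - j ≤ r by omega)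
    have e : r - (p - j) = q - k := by omega
    rw [e] at this
    omega
  have expand : p.choose j * q.choose k * r.factorial
      = (p.choose j * (p - j).factorial) * (q.choose k * (q - k).factorial) * r.choose (p - j) := by
    rw [hfact]; ring
  rw [expand]
  rcases hne with h | h
  · exact Dvd.dvd.mul_right (Dvd.dvd.mul_right
      (dvd_trans hdp (p_dvd_choose_mul_fact h)) _) _
  · exact Dvd.dvd.mul_right (Dvd.dvd.mul_left
      (dvd_trans hdq (p_dvd_choose_mul_fact h)) _) _

lemma fc_eq_prod {K t : ℕ} (h : t ≤ K) :
    fc K t = ∏ x ∈ Finset.range (K - t), (t + 1 + x) := by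
  induction K, h using Nat.le_induction with
  | base => simp [fc, Nat.div_self (Nat.factorial_pos t)]
  | succ K hK ih =>
    have hdvd : t.factorial ∣ K.factorial := Nat.factorial_dvd_factorial hK
    have step : fc (K + 1) t = (K + 1) * fc K t := by
      unfold fc
      rw [Nat.factorial_succ, Nat.mul_div_assoc _ hdvd]
    rw [step, ih]
    have e : K + 1 - t = (K - t) + 1 := by omega
    rw [e, Finset.prod_range_succ]
    have e2 : t + 1 + (K - t) = K + 1 := by omega
    rw [e2]
    ring

lemma shift_lemma {d B A T : ℕ} (hdB : d ∣ B) (h1 : B ≤ T) (h2 : T ≤ A + B) :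
    ((fc (A + B) T : ℕ) : ZMod d) = ((fc A (T - B) : ℕ) : ZMod d) := by
  rw [fc_eq_prod h2, fc_eq_prod (show T - B ≤ A by omega)]
  have e : A + B - T = A - (T - B) := by omega
  rw [e, Nat.cast_prod, Nat.cast_prod]
  apply Finset.prod_congr rfl
  intro x _
  have e2 : T + 1 + x = (T - B + 1 + x) + B := by omega
  rw [e2, Nat.cast_add, (ZMod.natCast_eq_zero_iff B d).2 hdB, add_zero]

lemma fin2_decomp (u : Fin 2 →₀ ℕ) :
    Finsupp.single (0 : Fin 2) (u 0) + Finsupp.single 1 (u 1) = u := by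
  ext a
  fin_cases a <;> simp [Finsupp.single_apply]

lemma finsupp_antidiag_eq {M : Type*} [AddCommMonoid M] (v : Fin 2 →₀ ℕ)
    (f : ℕ → ℕ → ℕ → ℕ → M) :
    ∑ x ∈ Finset.HasAntidiagonal.antidiagonal v, f (x.1 0) (x.1 1) (x.2 0) (x.2 1)
      = ∑ aj ∈ Finset.HasAntidiagonal.antidiagonal (v 0), ∑ bk ∈ Finset.HasAntidiagonal.antidiagonal (v 1),
          f aj.1 bk.1 aj.2 bk.2 := by
  rw [← Finset.sum_product']
  apply Finset.sum_nbij'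
    (i := fun (x : (Fin 2 →₀ ℕ) × (Fin 2 →₀ ℕ)) => ((x.1 0, x.2 0), (x.1 1, x.2 1)))
    (j := fun (y : (ℕ × ℕ) × (ℕ × ℕ)) => (Finsupp.single 0 y.1.1 + Finsupp.single 1 y.2.1,
      Finsupp.single 0 y.1.2 + Finsupp.single 1 y.2.2))
  · intro x hx
    rw [Finset.HasAntidiagonal.mem_antidiagonal] at hx
    simp only [Finset.mem_product, Finset.HasAntidiagonal.mem_antidiagonal]
    constructor
    · have := congrArg (fun w => w 0) hx
      simpa using this
    · have := congrArg (fun w => w 1) hx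
      simpa using this
  · intro y hy
    simp only [Finset.mem_product, Finset.HasAntidiagonal.mem_antidiagonal] at hy
    rw [Finset.HasAntidiagonal.mem_antidiagonal]
    ext a
    fin_cases a <;> simp [Finsupp.single_apply, hy.1, hy.2]
  · intro x _
    have h1 := fin2_decomp x.1
    have h2 := fin2_decomp x.2
    ext a <;> simp_all
  · intro y _
    simp [Finsupp.single_apply]
  · intro x _
    rfl

lemma fin2_single_eq (s i : ℕ) (v : Fin 2 →₀ ℕ) :
    (Finsupp.single (0 : Fin 2) s + Finsupp.single 1 i = v) ↔ (s = v 0 ∧ i = v 1) := by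
  constructor
  · rintro rfl
    constructor <;> simp [Finsupp.single_apply]
  · rintro ⟨h1, h2⟩
    ext a
    fin_cases a <;> simp [Finsupp.single_apply, h1, h2]

lemma cxy_eq_monomial (c : ℤ) (s i : ℕ) :
    MvPolynomial.C c * MvPolynomial.X (0 : Fin 2) ^ s * MvPolynomial.X 1 ^ i =
      MvPolynomial.monomial (Finsupp.single 0 s + Finsupp.single 1 i) c := by
  rw [MvPolynomial.X_pow_eq_monomial, MvPolynomial.X_pow_eq_monomial,
    MvPolynomial.C_apply, MvPolynomial.monomial_mul, MvPolynomial.monomial_mul]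
  simp

lemma coeff_sLag2 (n m : ℕ) (v : Fin 2 →₀ ℕ) :
    MvPolynomial.coeff v (sLag2 n m) =
      (-1 : ℤ) ^ (v 0 + v 1) *
        ((n.choose (v 0) * m.choose (v 1) * fc (m + n) (v 0 + v 1) : ℕ) : ℤ) := by
  unfold sLag2
  simp only [MvPolynomial.coeff_sum, cxy_eq_monomial, MvPolynomial.coeff_monomial,
    fin2_single_eq]
  have h2 : ∀ i ∈ Finset.range (m+1),
      (∑ s ∈ Finset.range (n+1), if s = v 0 ∧ i = v 1 then
        ((-1 : ℤ) ^ (i + s) * ((m.factorial / i.factorial : ℕ) : ℤ) *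
        ((n.factorial / s.factorial : ℕ) : ℤ) *
        ((m + n).choose (m - i) : ℤ) * ((n + i).choose (n - s) : ℤ)) else 0)
      = (if i = v 1 then (if v 0 ≤ n then
        ((-1 : ℤ) ^ (i + v 0) * ((m.factorial / i.factorial : ℕ) : ℤ) *
        ((n.factorial / (v 0).factorial : ℕ) : ℤ) *
        ((m + n).choose (m - i) : ℤ) * ((n + i).choose (n - v 0) : ℤ)) else 0) else 0) := by
    intro i _
    by_cases hi : i = v 1
    · simp only [hi, and_true, if_pos rfl]
      rw [Finset.sum_ite_eq' (Finset.range (n+1)) (v 0)]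
      simp only [Finset.mem_range, Nat.lt_succ_iff]
      subst hi; rfl
    · simp [hi]
  rw [Finset.sum_congr rfl h2, Finset.sum_ite_eq' (Finset.range (m+1)) (v 1)]
  simp only [Finset.mem_range, Nat.lt_succ_iff]
  by_cases h1 : v 1 ≤ m
  · by_cases h0 : v 0 ≤ n
    · rw [if_pos h1, if_pos h0]
      have hL := @L0 n m (v 0) (v 1) h0 h1
      have hL' : m.factorial / (v 1).factorial * (n.factorial / (v 0).factorial) *
          (m + n).choose (m - v 1) * (n + v 1).choose (n - v 0)
          = n.choose (v 0) * m.choose (v 1) * fc (m + n) (v 0 + v 1) :=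
        hL.trans (by ring)
      have hc : ((m.factorial / (v 1).factorial : ℕ) : ℤ) * ((n.factorial / (v 0).factorial : ℕ) : ℤ) *
          ((m + n).choose (m - v 1) : ℤ) * ((n + v 1).choose (n - v 0) : ℤ)
          = ((n.choose (v 0) * m.choose (v 1) * fc (m + n) (v 0 + v 1) : ℕ) : ℤ) := by
        exact_mod_cast congrArg (Nat.cast : ℕ → ℤ) hL'
      linear_combination ((-1 : ℤ) ^ (v 0 + v 1)) * hc
    · rw [if_pos h1, if_neg h0]
      rw [Nat.choose_eq_zero_of_lt (show n < v 0 by omega)]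
      simp
  · rw [if_neg h1]
    rw [Nat.choose_eq_zero_of_lt (show m < v 1 by omega)]
    simp



lemma lemmaL {d : ℕ} (n m p q S I : ℕ) (hdp : d ∣ p) (hdq : d ∣ q) (hp : 0 < p) (hq : 0 < q) :
    (((n + p).choose S * ((m + q).choose I) * fc (m + n + (p + q)) (S + I) : ℕ) : ZMod d)
      = ∑ aj ∈ Finset.HasAntidiagonal.antidiagonal S, ∑ bk ∈ Finset.HasAntidiagonal.antidiagonal I,
          ((n.choose aj.1 * p.choose aj.2 * m.choose bk.1 * q.choose bk.2 : ℕ) : ZMod d) *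
            (if aj.2 = p ∧ bk.2 = q then ((fc (m + n) (S + I - (p + q)) : ℕ) : ZMod d)
              else 0) := by
  have hdB : d ∣ p + q := dvd_add hdp hdq
  rw [Nat.add_choose_eq n p S, Nat.add_choose_eq m q I]
  push_cast
  rw [Finset.sum_mul_sum]
  simp only [Finset.sum_mul]
  refine Finset.sum_congr rfl fun aj haj => Finset.sum_congr rfl fun bk hbk => ?_
  rw [Finset.HasAntidiagonal.mem_antidiagonal] at haj hbk
  by_cases hpq : aj.2 = p ∧ bk.2 = q
  · rw [if_pos hpq]
    obtain ⟨hjp, hkq⟩ := hpq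
    by_cases hT : S + I ≤ m + n + (p + q)
    · rw [shift_lemma hdB (by omega) hT]
      push_cast
      ring
    · have h1 : fc (m + n + (p + q)) (S + I) = 0 := fc_zero_of_lt (by omega) (by omega)
      have h3 : n.choose aj.1 * p.choose aj.2 * m.choose bk.1 * q.choose bk.2 = 0 := by
        rcases Nat.lt_or_ge n aj.1 with h | h
        · rw [Nat.choose_eq_zero_of_lt h]
          ring
        · rw [Nat.choose_eq_zero_of_lt (show m < bk.1 by omega)]
          ring
      rw [h1]
      have h3' := congrArg (Nat.cast : ℕ → ZMod d) h3
      push_cast at h3' ⊢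
      linear_combination (-((fc (m + n) (S + I - (p + q)) : ℕ) : ZMod d)) * h3'
  · rw [if_neg hpq, mul_zero]
    by_cases hj : aj.2 ≤ p
    swap
    · rw [Nat.choose_eq_zero_of_lt (by omega : p < aj.2)]
      push_cast
      ring
    by_cases hk : bk.2 ≤ q
    swap
    · rw [Nat.choose_eq_zero_of_lt (by omega : q < bk.2)]
      push_cast
      ring
    have hor : aj.2 < p ∨ bk.2 < q := by
      rcases Nat.lt_or_ge aj.2 p with h | h
      · exact Or.inl h
      · refine Or.inr ?_
        rcases Nat.lt_or_ge bk.2 q with h2 | h2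
        · exact h2
        · exact absurd ⟨by omega, by omega⟩ hpq
    by_cases hTB : p + q ≤ S + I
    · by_cases hT : S + I ≤ m + n + (p + q)
      · rw [shift_lemma hdB hTB hT]
        by_cases han : aj.1 ≤ n
        swap
        · rw [Nat.choose_eq_zero_of_lt (by omega : n < aj.1)]
          push_cast
          ring
        by_cases hbm : bk.1 ≤ m
        swap
        · rw [Nat.choose_eq_zero_of_lt (by omega : m < bk.1)]
          push_cast
          ring
        have hule : S + I - (p + q) ≤ m + n := by omega
        have hrle : p - aj.2 + (q - bk.2) ≤ m + n - (S + I - (p + q)) := by omega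
        have h5 : d ∣ p.choose aj.2 * q.choose bk.2 * (p - aj.2 + (q - bk.2)).factorial :=
          key_dvd hdp hdq hor
        have h6 : (p - aj.2 + (q - bk.2)).factorial ∣ (m + n - (S + I - (p + q))).factorial :=
          Nat.factorial_dvd_factorial hrle
        have h7 : d ∣ p.choose aj.2 * q.choose bk.2 * fc (m + n) (S + I - (p + q)) := by
          rw [fc_eq hule]
          have h6' : d ∣ p.choose aj.2 * q.choose bk.2 * (m + n - (S + I - (p + q))).factorial :=
            dvd_trans h5 (mul_dvd_mul_left _ h6)
          have h6'' := h6'.mul_left ((m + n).choose (S + I - (p + q)))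
          rw [show p.choose aj.2 * q.choose bk.2 *
              ((m + n).choose (S + I - (p + q)) * (m + n - (S + I - (p + q))).factorial)
            = (m + n).choose (S + I - (p + q)) *
              (p.choose aj.2 * q.choose bk.2 * (m + n - (S + I - (p + q))).factorial)
            from by ring]
          exact h6''
        have h8 : ((p.choose aj.2 * q.choose bk.2 * fc (m + n) (S + I - (p + q)) : ℕ)
            : ZMod d) = 0 := (ZMod.natCast_eq_zero_iff _ d).2 h7
        push_cast at h8 ⊢
        linear_combination ((n.choose aj.1 : ZMod d) * (m.choose bk.1 : ZMod d)) * h8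
      · rw [fc_zero_of_lt (show (0:ℕ) < m + n + (p + q) by omega) (by omega)]
        push_cast
        ring
    · have h9 : fc (m + n + (p + q)) (S + I)
          = fc (m + n + (p + q)) (p + q) * fc (p + q) (S + I) :=
        fc_mul_fc (by omega) (by omega)
      have h10 : d ∣ fc (m + n + (p + q)) (S + I) := by
        rw [h9]
        exact Dvd.dvd.mul_left (dvd_trans hdB (dvd_fc_of_lt (by omega))) _
      rw [(ZMod.natCast_eq_zero_iff _ d).2 h10]
      ring

lemma lemmaR {d : ℕ} (n m p q S I : ℕ) (hdp : d ∣ p) (hdq : d ∣ q) (hp : 0 < p) (hq : 0 < q) :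
    (∑ aj ∈ Finset.HasAntidiagonal.antidiagonal S, ∑ bk ∈ Finset.HasAntidiagonal.antidiagonal I,
        ((n.choose aj.1 * m.choose bk.1 * fc (m + n) (aj.1 + bk.1) : ℕ) : ZMod d) *
          ((p.choose aj.2 * q.choose bk.2 * fc (q + p) (aj.2 + bk.2) : ℕ) : ZMod d))
      = ∑ aj ∈ Finset.HasAntidiagonal.antidiagonal S, ∑ bk ∈ Finset.HasAntidiagonal.antidiagonal I,
          ((n.choose aj.1 * p.choose aj.2 * m.choose bk.1 * q.choose bk.2 : ℕ) : ZMod d) *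
            (if aj.2 = p ∧ bk.2 = q then ((fc (m + n) (S + I - (p + q)) : ℕ) : ZMod d)
              else 0) := by
  refine Finset.sum_congr rfl fun aj haj => Finset.sum_congr rfl fun bk hbk => ?_
  rw [Finset.HasAntidiagonal.mem_antidiagonal] at haj hbk
  by_cases hpq : aj.2 = p ∧ bk.2 = q
  · obtain ⟨hjp, hkq⟩ := hpq
    rw [if_pos ⟨hjp, hkq⟩]
    rw [show aj.2 + bk.2 = q + p from by omega, fc_self,
      show aj.1 + bk.1 = S + I - (p + q) from by omega]
    push_cast
    ring
  · rw [if_neg hpq, mul_zero]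
    by_cases hj : aj.2 ≤ p
    · by_cases hk : bk.2 ≤ q
      · have hlt : aj.2 + bk.2 < q + p := by
          rcases Nat.lt_or_ge aj.2 p with h | h
          · omega
          · have : aj.2 = p := by omega
            have : bk.2 < q := by
              rcases Nat.lt_or_ge bk.2 q with h2 | h2
              · exact h2
              · exact absurd ⟨this, by omega⟩ hpq
            omega
        have hdvd : d ∣ p.choose aj.2 * q.choose bk.2 * fc (q + p) (aj.2 + bk.2) :=
          Dvd.dvd.mul_left (dvd_trans (dvd_add hdq hdp) (dvd_fc_of_lt hlt)) _
        rw [(ZMod.natCast_eq_zero_iff _ d).2 hdvd, mul_zero]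
      · rw [Nat.choose_eq_zero_of_lt (by omega : q < bk.2)]
        push_cast
        ring
    · rw [Nat.choose_eq_zero_of_lt (by omega : p < aj.2)]
      push_cast
      ring

/-- The main theorem: `𝕃_{n+p,m+q}(X,Y) ≡ 𝕃_{n,m}(X,Y)·𝕃_{p,q}(X,Y) (mod gcd(p,q))`. -/
theorem stmt_13 (n m : ℕ) (p q : ℕ) (hp : 0 < p) (hq : 0 < q) :
    ∀ v : Fin 2 →₀ ℕ, (Nat.gcd p q : ℤ) ∣
      MvPolynomial.coeff v (sLag2 (n + p) (m + q) - sLag2 n m * sLag2 p q) := by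
  intro v
  set d := p.gcd q with hd
  have hdp : d ∣ p := Nat.gcd_dvd_left p q
  have hdq : d ∣ q := Nat.gcd_dvd_right p q
  have L1 : ((MvPolynomial.coeff v (sLag2 (n + p) (m + q)) : ℤ) : ZMod d)
      = (-1 : ZMod d) ^ (v 0 + v 1) *
        (((n + p).choose (v 0) * ((m + q).choose (v 1)) * fc (m + n + (p + q)) (v 0 + v 1) : ℕ)
          : ZMod d) := by
    rw [coeff_sLag2, show m + q + (n + p) = m + n + (p + q) from by ring]
    push_cast
    ring
  have R1 : ((MvPolynomial.coeff v (sLag2 n m * sLag2 p q) : ℤ) : ZMod d)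
      = ∑ aj ∈ Finset.HasAntidiagonal.antidiagonal (v 0), ∑ bk ∈ Finset.HasAntidiagonal.antidiagonal (v 1),
          ((-1 : ZMod d) ^ (aj.1 + bk.1) *
              ((n.choose aj.1 * m.choose bk.1 * fc (m + n) (aj.1 + bk.1) : ℕ) : ZMod d) *
            ((-1 : ZMod d) ^ (aj.2 + bk.2) *
              ((p.choose aj.2 * q.choose bk.2 * fc (q + p) (aj.2 + bk.2) : ℕ) : ZMod d))) := by
    rw [MvPolynomial.coeff_mul]
    rw [show ((∑ x ∈ Finset.HasAntidiagonal.antidiagonal v,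
        MvPolynomial.coeff x.1 (sLag2 n m) * MvPolynomial.coeff x.2 (sLag2 p q) : ℤ) : ZMod d)
      = ∑ x ∈ Finset.HasAntidiagonal.antidiagonal v,
          ((-1 : ZMod d) ^ (x.1 0 + x.1 1) *
              ((n.choose (x.1 0) * m.choose (x.1 1) * fc (m + n) (x.1 0 + x.1 1) : ℕ) : ZMod d) *
            ((-1 : ZMod d) ^ (x.2 0 + x.2 1) *
              ((p.choose (x.2 0) * q.choose (x.2 1) * fc (q + p) (x.2 0 + x.2 1) : ℕ) : ZMod d)))
      from by
        push_cast [coeff_sLag2]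
        refine Finset.sum_congr rfl fun x _ => ?_
        ring]
    exact finsupp_antidiag_eq v (fun a b j k =>
      (-1 : ZMod d) ^ (a + b) * ((n.choose a * m.choose b * fc (m + n) (a + b) : ℕ) : ZMod d) *
      ((-1 : ZMod d) ^ (j + k) * ((p.choose j * q.choose k * fc (q + p) (j + k) : ℕ) : ZMod d)))
  have R2 : (∑ aj ∈ Finset.HasAntidiagonal.antidiagonal (v 0), ∑ bk ∈ Finset.HasAntidiagonal.antidiagonal (v 1),
          ((-1 : ZMod d) ^ (aj.1 + bk.1) *
              ((n.choose aj.1 * m.choose bk.1 * fc (m + n) (aj.1 + bk.1) : ℕ) : ZMod d) *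
            ((-1 : ZMod d) ^ (aj.2 + bk.2) *
              ((p.choose aj.2 * q.choose bk.2 * fc (q + p) (aj.2 + bk.2) : ℕ) : ZMod d))))
      = (-1 : ZMod d) ^ (v 0 + v 1) *
          ∑ aj ∈ Finset.HasAntidiagonal.antidiagonal (v 0), ∑ bk ∈ Finset.HasAntidiagonal.antidiagonal (v 1),
            ((n.choose aj.1 * m.choose bk.1 * fc (m + n) (aj.1 + bk.1) : ℕ) : ZMod d) *
              ((p.choose aj.2 * q.choose bk.2 * fc (q + p) (aj.2 + bk.2) : ℕ) : ZMod d) := by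
    rw [Finset.mul_sum]
    refine Finset.sum_congr rfl fun aj haj => ?_
    rw [Finset.mul_sum]
    refine Finset.sum_congr rfl fun bk hbk => ?_
    rw [Finset.HasAntidiagonal.mem_antidiagonal] at haj hbk
    rw [show v 0 + v 1 = (aj.1 + bk.1) + (aj.2 + bk.2) from by omega, pow_add]
    ring
  rw [← ZMod.intCast_zmod_eq_zero_iff_dvd, MvPolynomial.coeff_sub, Int.cast_sub, sub_eq_zero,
    L1, R1, R2, lemmaL n m p q (v 0) (v 1) hdp hdq hp hq,
    lemmaR n m p q (v 0) (v 1) hdp hdq hp hq]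
end

section
/- For all positive integers p, q, the polynomial congruence 𝕃_{p,q}(X,Y) ≡ (−1)^{p+q} X^p Y^q (mod gcd(p,q)) holds in ℤ[X,Y]. -/
open Polynomial MvPolynomial

lemma dvd_factorial_div' {n j : ℕ} (h : j < n) : n ∣ n.factorial / j.factorial := by
  obtain ⟨k, rfl⟩ : ∃ k, n = k + 1 :=
    ⟨n - 1, (Nat.succ_pred_eq_of_pos (Nat.pos_of_ne_zero fun hn => by omega)).symm⟩
  rw [Nat.factorial_succ, Nat.mul_div_assoc _ (Nat.factorial_dvd_factorial (Nat.lt_succ_iff.mp h))]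
  exact dvd_mul_right _ _

theorem stmt_14 (p q : ℕ) (hp : 0 < p) (hq : 0 < q) :
    ∀ v : Fin 2 →₀ ℕ, (Nat.gcd p q : ℤ) ∣
      MvPolynomial.coeff v
        (sLag2 p q -
          MvPolynomial.C ((-1 : ℤ) ^ (p + q)) * MvPolynomial.X 0 ^ p *
            MvPolynomial.X 1 ^ q) := by
  intro v
  set f : ℕ × ℕ → MvPolynomial (Fin 2) ℤ := fun x =>
    MvPolynomial.C ((-1 : ℤ) ^ (x.1 + x.2) * ((q.factorial / x.1.factorial : ℕ) : ℤ) *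
        ((p.factorial / x.2.factorial : ℕ) : ℤ) *
        ((q + p).choose (q - x.1) : ℤ) * ((p + x.1).choose (p - x.2) : ℤ)) *
      MvPolynomial.X 0 ^ x.2 * MvPolynomial.X 1 ^ x.1 with hf
  have hmem : ((q, p) : ℕ × ℕ) ∈ Finset.range (q+1) ×ˢ Finset.range (p+1) := by simp
  have hsplit : sLag2 p q -
      MvPolynomial.C ((-1 : ℤ) ^ (p + q)) * MvPolynomial.X 0 ^ p * MvPolynomial.X 1 ^ q =
      ∑ x ∈ (Finset.range (q+1) ×ˢ Finset.range (p+1)).erase (q, p), f x := by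
    rw [sLag2, ← Finset.sum_product', ← Finset.add_sum_erase _ f hmem]
    have : f (q, p) =
        MvPolynomial.C ((-1 : ℤ) ^ (p + q)) * MvPolynomial.X 0 ^ p * MvPolynomial.X 1 ^ q := by
      simp only [hf, Nat.sub_self, Nat.div_self (Nat.factorial_pos _), Nat.choose_zero_right,
        Nat.cast_one, mul_one, add_comm q p]
    rw [this]; ring
  rw [hsplit, MvPolynomial.coeff_sum]
  apply Finset.dvd_sum
  intro x hx
  have hx1 : x.1 ≤ q ∧ x.2 ≤ p ∧ x ≠ (q, p) := by
    have := Finset.mem_of_mem_erase hx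
    have hne := Finset.ne_of_mem_erase hx
    simp only [Finset.mem_product, Finset.mem_range] at this
    exact ⟨by omega, by omega, hne⟩
  obtain ⟨h1, h2, hne⟩ := hx1
  have key : (Nat.gcd p q : ℤ) ∣ ((-1 : ℤ) ^ (x.1 + x.2) * ((q.factorial / x.1.factorial : ℕ) : ℤ) *
        ((p.factorial / x.2.factorial : ℕ) : ℤ) *
        ((q + p).choose (q - x.1) : ℤ) * ((p + x.1).choose (p - x.2) : ℤ)) := by
    rcases eq_or_lt_of_le h1 with h1e | h1l
    · have h2l : x.2 < p := by
        rcases eq_or_lt_of_le h2 with h2e | h2l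
        · exact absurd (Prod.ext h1e h2e) hne
        · exact h2l
      have : (Nat.gcd p q : ℤ) ∣ ((p.factorial / x.2.factorial : ℕ) : ℤ) :=
        Int.natCast_dvd_natCast.mpr ((Nat.gcd_dvd_left p q).trans (dvd_factorial_div' h2l))
      exact ((this.mul_left _).mul_right _).mul_right _
    · have : (Nat.gcd p q : ℤ) ∣ ((q.factorial / x.1.factorial : ℕ) : ℤ) :=
        Int.natCast_dvd_natCast.mpr ((Nat.gcd_dvd_right p q).trans (dvd_factorial_div' h1l))
      exact (((this.mul_left _).mul_right _).mul_right _).mul_right _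
  simp only [hf]
  rw [mul_assoc, MvPolynomial.coeff_C_mul]
  exact key.mul_right _
end

section
/- For all natural numbers n, m, substituting Y := X in the two-variable Laguerre polynomial gives 𝕃_{n,m}(X,X) = ℒ_{n+m}^0(X) in ℤ[X]; that is, n!·m!·L_{n,m}(x,x) = (n+m)!·L_{n+m}(x), equivalently L_{n,m}(x,x) = C(n+m, n)·L_{n+m}(x). -/
open Polynomial MvPolynomial

lemma fact_div_eq {i m : ℕ} (h : i ≤ m) :
    m.factorial / i.factorial = m.choose i * (m - i).factorial := by
  refine Nat.div_eq_of_eq_mul_left i.factorial_pos ?_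
  rw [← Nat.choose_mul_factorial_mul_factorial h]; ring

lemma key_term {i s m n : ℕ} (hi : i ≤ m) (hs : s ≤ n) :
    (m.factorial / i.factorial) * (n.factorial / s.factorial) *
      ((m + n).choose (m - i)) * ((n + i).choose (n - s)) * (i + s).factorial
      = m.choose i * n.choose s * (m + n).factorial := by
  have h1 : (m + n).choose (m - i) * (m - i).factorial * (n + i).factorial
      = (m + n).factorial := by
    have h := Nat.choose_mul_factorial_mul_factorial (show m - i ≤ m + n by omega)
    rwa [show m + n - (m - i) = n + i by omega] at h
  have h2 : (n + i).choose (n - s) * (n - s).factorial * (i + s).factorial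
      = (n + i).factorial := by
    have h := Nat.choose_mul_factorial_mul_factorial (show n - s ≤ n + i by omega)
    rwa [show n + i - (n - s) = i + s by omega] at h
  rw [fact_div_eq hi, fact_div_eq hs]
  calc m.choose i * (m - i).factorial * (n.choose s * (n - s).factorial) *
        (m + n).choose (m - i) * (n + i).choose (n - s) * (i + s).factorial
      = m.choose i * n.choose s *
          ((m + n).choose (m - i) * (m - i).factorial *
            ((n + i).choose (n - s) * (n - s).factorial * (i + s).factorial)) := by ring
    _ = _ := by rw [h2, h1]

lemma vander (m n k : ℕ) :
    ∑ i ∈ Finset.range (m + 1), ∑ s ∈ Finset.range (n + 1),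
      (if s + i = k then m.choose i * n.choose s else 0) = (m + n).choose k := by
  rw [Nat.add_choose_eq, ← Finset.sum_product', ← Finset.sum_filter]
  refine Finset.sum_subset ?_ ?_
  · intro p hp
    simp only [Finset.mem_filter, Finset.mem_product, Finset.mem_range,
      Finset.HasAntidiagonal.mem_antidiagonal] at *
    omega
  · intro p hp hps
    simp only [Finset.mem_filter, Finset.mem_product, Finset.mem_range,
      Finset.HasAntidiagonal.mem_antidiagonal] at *
    rcases (show m < p.1 ∨ n < p.2 by omega) with h | h
    · rw [Nat.choose_eq_zero_of_lt h, zero_mul]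
    · rw [Nat.choose_eq_zero_of_lt h, mul_zero]

lemma key_sum {n m k : ℕ} (h : k ≤ n + m) :
    ∑ i ∈ Finset.range (m + 1), ∑ s ∈ Finset.range (n + 1),
      (if s + i = k then
        (m.factorial / i.factorial) * (n.factorial / s.factorial) *
          ((m + n).choose (m - i)) * ((n + i).choose (n - s)) else 0)
      = ((n + m).factorial / k.factorial) * ((n + m).choose (n + m - k)) := by
  refine Nat.eq_of_mul_eq_mul_right k.factorial_pos ?_
  have hL : (∑ i ∈ Finset.range (m + 1), ∑ s ∈ Finset.range (n + 1),
      (if s + i = k then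
        (m.factorial / i.factorial) * (n.factorial / s.factorial) *
          ((m + n).choose (m - i)) * ((n + i).choose (n - s)) else 0)) * k.factorial
      = ((m + n).choose k) * (m + n).factorial := by
    rw [← vander m n k, Finset.sum_mul, Finset.sum_mul]
    refine Finset.sum_congr rfl fun i hi => ?_
    rw [Finset.sum_mul, Finset.sum_mul]
    refine Finset.sum_congr rfl fun s hs => ?_
    simp only [Finset.mem_range] at hi hs
    split_ifs with hk
    · rw [← hk, Nat.add_comm s i]
      exact key_term (by omega) (by omega)
    · rw [zero_mul, zero_mul]
  rw [hL, mul_right_comm, Nat.div_mul_cancel (Nat.factorial_dvd_factorial h),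
    Nat.choose_symm h, Nat.add_comm n m, mul_comm]

/-- Substituting `Y := X` gives `𝕃_{n,m}(X,X) = ℒ_{n+m}^0(X)`,
i.e. `n!·m!·L_{n,m}(x,x) = (n+m)!·L_{n+m}(x)`,
equivalently `L_{n,m}(x,x) = C(n+m,n)·L_{n+m}(x)`. -/
theorem stmt_16 (n m : ℕ) :
    MvPolynomial.aeval (fun _ : Fin 2 => (Polynomial.X : Polynomial ℤ)) (sLag2 n m) =
      sLag (n + m) 0 := by
  refine Polynomial.ext fun k => ?_
  rw [sLag2, sLag]
  simp only [map_sum, map_mul, map_pow, MvPolynomial.aeval_C, MvPolynomial.aeval_X,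
    Polynomial.algebraMap_eq, mul_assoc, ← pow_add, Nat.add_zero]
  simp only [← mul_assoc, ← map_pow, ← map_mul, Polynomial.finset_sum_coeff,
    Polynomial.coeff_C_mul, Polynomial.coeff_X_pow, mul_ite, mul_one, mul_zero]
  rw [Finset.sum_ite_eq]
  refine Eq.trans (b := (-1 : ℤ) ^ k * ∑ i ∈ Finset.range (m + 1), ∑ s ∈ Finset.range (n + 1),
      (if k = s + i then
        ((m.factorial / i.factorial : ℕ) : ℤ) * ((n.factorial / s.factorial : ℕ) : ℤ) *
          (((m + n).choose (m - i) : ℕ) : ℤ) * (((n + i).choose (n - s) : ℕ) : ℤ) else 0)) ?_ ?_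
  · rw [Finset.mul_sum]
    refine Finset.sum_congr rfl fun i _ => ?_
    rw [Finset.mul_sum]
    refine Finset.sum_congr rfl fun s _ => ?_
    split_ifs with hk
    · rw [hk]; ring
    · rw [mul_zero]
  · split_ifs with hk
    · rw [Finset.mem_range] at hk
      have hcast : (∑ i ∈ Finset.range (m + 1), ∑ s ∈ Finset.range (n + 1),
          (if k = s + i then
            ((m.factorial / i.factorial : ℕ) : ℤ) * ((n.factorial / s.factorial : ℕ) : ℤ) *
              (((m + n).choose (m - i) : ℕ) : ℤ) * (((n + i).choose (n - s) : ℕ) : ℤ) else 0))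
          = ((∑ i ∈ Finset.range (m + 1), ∑ s ∈ Finset.range (n + 1),
            (if s + i = k then
              (m.factorial / i.factorial) * (n.factorial / s.factorial) *
                ((m + n).choose (m - i)) * ((n + i).choose (n - s)) else 0) : ℕ) : ℤ) := by
        push_cast
        refine Finset.sum_congr rfl fun i _ => Finset.sum_congr rfl fun s _ => ?_
        exact if_congr eq_comm rfl rfl
      rw [hcast, key_sum (by omega)]
      push_cast
      ring
    · rw [Finset.mem_range] at hk
      rw [Finset.sum_eq_zero, mul_zero]
      intro i hi
      rw [Finset.sum_eq_zero]
      intro s hs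
      rw [Finset.mem_range] at hi hs
      rw [if_neg (by omega)]
end

section
/- For all natural numbers n, m, all positive integers p, q, and all indices t ≤ n+p and i ≤ m+q such that t < p or i < q, the integer gcd(p,q) divides the coefficient of X^t Y^i in 𝕃_{n+p,m+q}(X,Y), i.e. gcd(p,q) divides (−1)^{i+t} · ((n+p)!/t!) · ((m+q)!/i!) · C(m+q+n+p, m+q−i) · C(n+p+i, n+p−t). -/
open Polynomial MvPolynomial

lemma aux_dvd_fac_div (t p N : ℕ) (h1 : t < p) (h2 : p ≤ N) :
    p ∣ N.factorial / t.factorial := by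
  have htp : t.factorial ∣ p.factorial := Nat.factorial_dvd_factorial h1.le
  have hpN : p.factorial ∣ N.factorial := Nat.factorial_dvd_factorial h2
  have key : N.factorial / t.factorial
      = (N.factorial / p.factorial) * (p.factorial / t.factorial) := by
    rw [Nat.div_mul_div_comm hpN htp, mul_comm p.factorial t.factorial,
      Nat.mul_div_mul_right _ _ p.factorial_pos]
  rw [key]
  have : p ∣ p.factorial / t.factorial := by
    have ht' : t ≤ p - 1 := by omega
    have hfac : p.factorial = p * (p-1).factorial := by
      conv_lhs => rw [show p = (p-1)+1 by omega]
      rw [Nat.factorial_succ]; congr 1; omega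
    rw [hfac, Nat.mul_div_assoc p (Nat.factorial_dvd_factorial ht')]
    exact Dvd.intro _ rfl
  exact Dvd.dvd.mul_left this _

lemma coeff_sLag2_s17 (n m t i : ℕ) (ht : t ≤ n) (hi : i ≤ m) :
    MvPolynomial.coeff (Finsupp.single 0 t + Finsupp.single 1 i) (sLag2 n m) =
      (-1 : ℤ) ^ (i + t) * ((m.factorial / i.factorial : ℕ) : ℤ) *
        ((n.factorial / t.factorial : ℕ) : ℤ) *
        ((m + n).choose (m - i) : ℤ) * ((n + i).choose (n - t) : ℤ) := by
  have hmono : ∀ (c : ℤ) (s j : ℕ),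
      MvPolynomial.C c * MvPolynomial.X (0 : Fin 2) ^ s * MvPolynomial.X 1 ^ j
        = monomial (Finsupp.single (0 : Fin 2) s + Finsupp.single (1 : Fin 2) j) c := by
    intro c s j
    rw [MvPolynomial.X_pow_eq_monomial, MvPolynomial.X_pow_eq_monomial,
      MvPolynomial.C_apply, MvPolynomial.monomial_mul, MvPolynomial.monomial_mul]
    simp
  have hkey : ∀ s j : ℕ,
      (Finsupp.single (0 : Fin 2) s + Finsupp.single (1 : Fin 2) j =
        Finsupp.single 0 t + Finsupp.single 1 i) ↔ (s = t ∧ j = i) := by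
    intro s j
    constructor
    · intro hEq
      have h0 := DFunLike.congr_fun hEq 0
      have h1 := DFunLike.congr_fun hEq 1
      simp [Finsupp.single_apply] at h0 h1
      exact ⟨h0, h1⟩
    · rintro ⟨rfl, rfl⟩; rfl
  unfold sLag2
  simp only [hmono, MvPolynomial.coeff_sum]
  rw [Finset.sum_eq_single i]
  · rw [Finset.sum_eq_single t]
    · rw [MvPolynomial.coeff_monomial, if_pos rfl]
    · intro s _ hs
      rw [MvPolynomial.coeff_monomial, if_neg (fun hEq => hs ((hkey s i).1 hEq).1)]
    · intro habs; exact absurd (Finset.mem_range.2 (by omega)) habs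
  · intro j _ hj
    apply Finset.sum_eq_zero
    intro s _
    rw [MvPolynomial.coeff_monomial, if_neg (fun hEq => hj ((hkey s j).1 hEq).2)]
  · intro habs; exact absurd (Finset.mem_range.2 (by omega)) habs

theorem stmt_17 (n m : ℕ) (p q : ℕ) (hp : 0 < p) (hq : 0 < q)
    (t i : ℕ) (ht : t ≤ n + p) (hi : i ≤ m + q) (h : t < p ∨ i < q) :
    (Nat.gcd p q : ℤ) ∣
        MvPolynomial.coeff (Finsupp.single 0 t + Finsupp.single 1 i)
          (sLag2 (n + p) (m + q)) ∧
      MvPolynomial.coeff (Finsupp.single 0 t + Finsupp.single 1 i)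
          (sLag2 (n + p) (m + q)) =
        (-1 : ℤ) ^ (i + t) * (((n + p).factorial / t.factorial : ℕ) : ℤ) *
          (((m + q).factorial / i.factorial : ℕ) : ℤ) *
          ((m + q + n + p).choose (m + q - i) : ℤ) *
          ((n + p + i).choose (n + p - t) : ℤ) := by
  have hc : MvPolynomial.coeff (Finsupp.single 0 t + Finsupp.single 1 i)
      (sLag2 (n + p) (m + q)) =
      (-1 : ℤ) ^ (i + t) * (((n + p).factorial / t.factorial : ℕ) : ℤ) *
        (((m + q).factorial / i.factorial : ℕ) : ℤ) *
        ((m + q + n + p).choose (m + q - i) : ℤ) *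
        ((n + p + i).choose (n + p - t) : ℤ) := by
    rw [coeff_sLag2_s17 (n+p) (m+q) t i ht hi, show m + q + (n + p) = m + q + n + p by ring]
    ring
  refine ⟨?_, hc⟩
  rw [hc]
  rcases h with h | h
  · have hd : (Nat.gcd p q : ℤ) ∣ (((n + p).factorial / t.factorial : ℕ) : ℤ) := by
      exact_mod_cast Int.natCast_dvd_natCast.2
        ((Nat.gcd_dvd_left p q).trans (aux_dvd_fac_div t p (n+p) h (by omega)))
    exact (((hd.mul_left _).mul_right _).mul_right _).mul_right _
  · have hd : (Nat.gcd p q : ℤ) ∣ (((m + q).factorial / i.factorial : ℕ) : ℤ) := by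
      exact_mod_cast Int.natCast_dvd_natCast.2
        ((Nat.gcd_dvd_right p q).trans (aux_dvd_fac_div i q (m+q) h (by omega)))
    exact ((hd.mul_left _).mul_right _).mul_right _
end

section
/- For all natural numbers k, α, t and all real x: e^x · (d^t/dx^t)( e^{−x} · L_k^α(x) ) = (−1)^t · L_k^{α+t}(x), where L_k^α denotes the generalized Laguerre polynomial regarded as a real polynomial function. -/
/-- The generalized Laguerre polynomial `L_k^α`, regarded as a smooth function of
a real variable: `L_k^α(x) = Σ_{j=0}^{k} ((−1)^j/j!) C(k+α, k−j) x^j`. -/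
noncomputable def lag (k α : ℕ) (x : ℝ) : ℝ :=
  ∑ j ∈ Finset.range (k + 1),
    (-1 : ℝ) ^ j / (j.factorial : ℝ) * ((k + α).choose (k - j) : ℝ) * x ^ j

lemma lag_succ (k α : ℕ) (x : ℝ) :
    lag k (α + 1) x = lag k α x + ∑ i ∈ Finset.range k,
      (-1 : ℝ) ^ i / (i.factorial : ℝ) * ((k + α).choose (k - i - 1) : ℝ) * x ^ i := by
  unfold lag
  rw [Finset.sum_range_succ, Finset.sum_range_succ]
  have hA : ∑ j ∈ Finset.range k,
      ((-1:ℝ)^j / (j.factorial : ℝ) * ((k+(α+1)).choose (k-j) : ℝ) * x^j)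
      = ∑ j ∈ Finset.range k, ((-1:ℝ)^j / (j.factorial : ℝ) * ((k+α).choose (k-j) : ℝ) * x^j
        + (-1:ℝ)^j / (j.factorial : ℝ) * ((k+α).choose (k-j-1) : ℝ) * x^j) := by
    apply Finset.sum_congr rfl
    intro j hj
    have hj' : j < k := Finset.mem_range.mp hj
    obtain ⟨m, hm⟩ : ∃ m, k - j = m + 1 := ⟨k - j - 1, by omega⟩
    have h1 : k + (α+1) = (k + α) + 1 := by omega
    rw [hm, h1, Nat.choose_succ_succ, Nat.add_sub_cancel]
    push_cast
    ring
  rw [hA, Finset.sum_add_distrib]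
  simp [Nat.sub_self]
  ring

lemma hasDerivAt_lag (k α : ℕ) (x : ℝ) :
    HasDerivAt (lag k α) (lag k α x - lag k (α+1) x) x := by
  have h : HasDerivAt (fun y : ℝ => ∑ j ∈ Finset.range (k + 1),
      (-1 : ℝ) ^ j / (j.factorial : ℝ) * ((k + α).choose (k - j) : ℝ) * y ^ j)
      (∑ j ∈ Finset.range (k+1),
        (-1:ℝ)^j / (j.factorial : ℝ) * ((k+α).choose (k-j) : ℝ) * ((j:ℝ) * x^(j-1))) x := by
    apply HasDerivAt.fun_sum
    intro j hj
    exact (hasDerivAt_pow j x).const_mul _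
  have hsum : (∑ j ∈ Finset.range (k+1),
        (-1:ℝ)^j / (j.factorial : ℝ) * ((k+α).choose (k-j) : ℝ) * ((j:ℝ) * x^(j-1)))
      = lag k α x - lag k (α+1) x := by
    rw [lag_succ]
    rw [Finset.sum_range_succ']
    have : ∀ i ∈ Finset.range k,
        (-1:ℝ)^(i+1) / ((i+1).factorial : ℝ) * ((k+α).choose (k-(i+1)) : ℝ) * (((i+1:ℕ):ℝ) * x^((i+1)-1))
        = -((-1:ℝ)^i / (i.factorial : ℝ) * ((k+α).choose (k-i-1) : ℝ) * x^i) := by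
      intro i _
      have hfac : ((i.factorial : ℝ)) ≠ 0 := by positivity
      have h2 : k - (i+1) = k - i - 1 := by omega
      rw [h2, Nat.factorial_succ]
      push_cast
      field_simp
      ring
    rw [Finset.sum_congr rfl this]
    simp [Finset.sum_neg_distrib]
  rw [← hsum]
  exact h

lemma hasDerivAt_prod (k α : ℕ) (x : ℝ) :
    HasDerivAt (fun u => Real.exp (-u) * lag k α u)
      (-(Real.exp (-x) * lag k (α+1) x)) x := by
  have hexp : HasDerivAt (fun u : ℝ => Real.exp (-u)) (-Real.exp (-x)) x := by
    simpa [Function.comp_def] using (Real.hasDerivAt_exp (-x)).comp x (hasDerivAt_neg x)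
  have : HasDerivAt (fun u => Real.exp (-u) * lag k α u) _ x := hexp.mul (hasDerivAt_lag k α x)
  convert this using 1
  ring

theorem stmt_18 (k α t : ℕ) (x : ℝ) :
    Real.exp x * iteratedDeriv t (fun u => Real.exp (-u) * lag k α u) x =
      (-1 : ℝ) ^ t * lag k (α + t) x := by
  induction t generalizing α with
  | zero =>
    simp [iteratedDeriv_zero, ← Real.exp_add, ← mul_assoc]
  | succ t ih =>
    rw [iteratedDeriv_succ']
    have hd : deriv (fun u => Real.exp (-u) * lag k α u)
        = fun u => -(Real.exp (-u) * lag k (α+1) u) := by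
      funext u
      exact (hasDerivAt_prod k α u).deriv
    rw [hd]
    have hneg : iteratedDeriv t (fun u => -(Real.exp (-u) * lag k (α+1) u)) x
        = - iteratedDeriv t (fun u => Real.exp (-u) * lag k (α+1) u) x := by
      exact iteratedDeriv_neg t (fun u => Real.exp (-u) * lag k (α+1) u) x
    rw [hneg]
    have hα : α + (t+1) = (α+1) + t := by omega
    rw [hα, mul_neg, ih (α+1), pow_succ]
    ring
end
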